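/- arXiv:1605.02298 — 2 statements merged into one kernel-verified Lean document; each statement's English description precedes it below -/
import Mathlib

section
/- Let a, b, c, d be nonnegative reals with ad ≤ bc, and let f, g be real-rooted polynomials with nonnegative coefficients such that g interlaces f. Then a·x·g + b·f interlaces c·x·g + d·f, provided both are nonzero. -/
open Polynomial Finset

/-- A real polynomial has only real roots: the number of real roots
(with multiplicity) equals its degree. (The zero polynomial counts.) -/
def RealRooted (p : Polynomial ℝ) : Prop :=
  p.roots.card = p.natDegree

/-- The list of real roots of `p`, sorted in increasing order. -/
noncomputable def rootList (p : Polynomial ℝ) : List ℝ :=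
  p.roots.sort (· ≤ ·)

/-- `Interlaces g f` means `g ≼ f`: both are real-rooted with positive leading
coefficients, `deg f ∈ {deg g, deg g + 1}`, and the roots alternate
(`v_n ≤ u_n ≤ v_{n-1} ≤ ⋯ ≤ v_1 ≤ u_1`, resp. `u_n ≤ v_{n-1} ≤ ⋯ ≤ v_1 ≤ u_1`,
indexed in decreasing order). The zero polynomial interlaces and is
interlaced by everything, by convention. -/
def Interlaces (g f : Polynomial ℝ) : Prop :=
  g = 0 ∨ f = 0 ∨
    (RealRooted f ∧ RealRooted g ∧ 0 < f.leadingCoeff ∧ 0 < g.leadingCoeff ∧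
      ((f.natDegree = g.natDegree ∧
          (∀ i < f.natDegree, (rootList g).getD i 0 ≤ (rootList f).getD i 0) ∧
          (∀ i, i + 1 < f.natDegree →
            (rootList f).getD i 0 ≤ (rootList g).getD (i + 1) 0)) ∨
       (f.natDegree = g.natDegree + 1 ∧
          (∀ i < g.natDegree, (rootList f).getD i 0 ≤ (rootList g).getD i 0) ∧
          (∀ i, i + 1 < f.natDegree →
            (rootList g).getD i 0 ≤ (rootList f).getD (i + 1) 0))))

/-- All coefficients of `p` are nonnegative. -/
def NonnegCoeffs (p : Polynomial ℝ) : Prop :=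
  ∀ k, 0 ≤ p.coeff k

noncomputable def cntL (l : List ℝ) (x : ℝ) : ℕ := (l.filter (fun r => decide (r ≤ x))).length

lemma cntL_nil (x : ℝ) : cntL [] x = 0 := rfl

lemma cntL_cons (a : ℝ) (l : List ℝ) (x : ℝ) :
    cntL (a :: l) x = (if a ≤ x then 1 else 0) + cntL l x := by
  unfold cntL
  by_cases h : a ≤ x <;> simp [List.filter_cons, h] <;> omega

lemma cntL_le_length (l : List ℝ) (x : ℝ) : cntL l x ≤ l.length :=
  List.length_filter_le _ _

lemma cntL_eq_zero (l : List ℝ) (x : ℝ) (h : ∀ b ∈ l, ¬ b ≤ x) : cntL l x = 0 := by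
  unfold cntL
  rw [List.filter_eq_nil_iff.2 (by intro b hb; simpa using h b hb)]
  rfl

lemma sorted_getD_mono {l : List ℝ} (hl : l.Pairwise (· ≤ ·)) {i j : ℕ} (hij : i ≤ j)
    (hj : j < l.length) : l.getD i 0 ≤ l.getD j 0 := by
  rcases eq_or_lt_of_le hij with rfl | hlt
  · exact le_refl _
  · have hi : i < l.length := lt_trans hlt hj
    rw [List.getD_eq_getElem l 0 hi, List.getD_eq_getElem l 0 hj]
    exact List.pairwise_iff_getElem.1 hl i j hi hj hlt

lemma getD_le_iff_lt_cntL {l : List ℝ} (hl : l.Pairwise (· ≤ ·)) {k : ℕ} (hk : k < l.length)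
    (x : ℝ) : l.getD k 0 ≤ x ↔ k < cntL l x := by
  induction l generalizing k with
  | nil => simp at hk
  | cons a l ih =>
    rw [List.pairwise_cons] at hl
    by_cases ha : a ≤ x
    · rw [cntL_cons]
      simp only [ha, if_true]
      cases k with
      | zero => simpa using ha
      | succ k =>
        have hk' : k < l.length := by simpa using hk
        rw [show (a :: l).getD (k+1) 0 = l.getD k 0 from rfl]
        rw [ih hl.2 hk']
        omega
    · have h0 : cntL (a :: l) x = 0 := by
        apply cntL_eq_zero
        intro b hb
        rcases List.mem_cons.1 hb with rfl | hb
        · exact ha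
        · intro hbx; exact ha (le_trans (hl.1 b hb) hbx)
      rw [h0]
      simp only [Nat.not_lt_zero, iff_false, not_le]
      have : a ≤ (a :: l).getD k 0 := by
        have := sorted_getD_mono (l := a :: l) (by rw [List.pairwise_cons]; exact hl)
          (Nat.zero_le k) hk
        simpa using this
      exact lt_of_lt_of_le (lt_of_not_ge ha) this

lemma idx_iff_cnt_le {lA lB : List ℝ} (hA : lA.Pairwise (· ≤ ·)) (hB : lB.Pairwise (· ≤ ·))
    (hlen : lA.length ≤ lB.length) :
    (∀ i < lA.length, lB.getD i 0 ≤ lA.getD i 0) ↔ ∀ x, cntL lA x ≤ cntL lB x := by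
  constructor
  · intro h x
    rcases Nat.eq_zero_or_pos (cntL lA x) with h0 | hpos
    · omega
    · set k := cntL lA x with hk
      have hk1 : k - 1 < lA.length := by have := cntL_le_length lA x; omega
      have h1 : lA.getD (k-1) 0 ≤ x := (getD_le_iff_lt_cntL hA hk1 x).2 (by omega)
      have h2 : lB.getD (k-1) 0 ≤ x := le_trans (h _ hk1) h1
      have := (getD_le_iff_lt_cntL hB (lt_of_lt_of_le hk1 hlen) x).1 h2
      omega
  · intro h i hi
    have h1 : i < cntL lA (lA.getD i 0) := (getD_le_iff_lt_cntL hA hi _).1 (le_refl _)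
    have h2 : i < cntL lB (lA.getD i 0) := lt_of_lt_of_le h1 (h _)
    have hiB : i < lB.length := lt_of_lt_of_le h2 (cntL_le_length _ _)
    exact (getD_le_iff_lt_cntL hB hiB _).2 h2

lemma idx_iff_cnt_shift {lA lB : List ℝ} (hA : lA.Pairwise (· ≤ ·)) (hB : lB.Pairwise (· ≤ ·))
    (hlen : lB.length ≤ lA.length + 1) :
    (∀ i, i + 1 < lB.length → lA.getD i 0 ≤ lB.getD (i + 1) 0) ↔
      ∀ x, cntL lB x ≤ cntL lA x + 1 := by
  constructor
  · intro h x
    rcases Nat.lt_or_ge (cntL lB x) 2 with h0 | h2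
    · omega
    · set k := cntL lB x with hk
      have hkB : k - 1 < lB.length := by have := cntL_le_length lB x; omega
      have hb : lB.getD (k-1) 0 ≤ x := (getD_le_iff_lt_cntL hB hkB x).2 (by omega)
      have ha : lA.getD (k-2) 0 ≤ x := by
        have := h (k-2) (by omega)
        have heq : k - 2 + 1 = k - 1 := by omega
        rw [heq] at this
        exact le_trans this hb
      have hkA : k - 2 < lA.length := by omega
      have := (getD_le_iff_lt_cntL hA hkA x).1 ha
      omega
  · intro h i hi
    have h1 : i + 1 < cntL lB (lB.getD (i+1) 0) :=
      (getD_le_iff_lt_cntL hB (by omega : i + 1 < lB.length) _).1 (le_refl _)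
    have h2 : i < cntL lA (lB.getD (i+1) 0) := by have := h (lB.getD (i+1) 0); omega
    have hiA : i < lA.length := lt_of_lt_of_le h2 (cntL_le_length _ _)
    exact (getD_le_iff_lt_cntL hA hiA _).2 h2

lemma rootList_sorted (p : Polynomial ℝ) : (rootList p).Pairwise (· ≤ ·) :=
  Multiset.pairwise_sort _ _

lemma coe_rootList (p : Polynomial ℝ) : (↑(rootList p) : Multiset ℝ) = p.roots :=
  Multiset.sort_eq _ _

lemma rootList_length (p : Polynomial ℝ) : (rootList p).length = Multiset.card p.roots :=
  Multiset.length_sort _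

lemma rootList_length_eq {p : Polynomial ℝ} (h : RealRooted p) :
    (rootList p).length = p.natDegree := by rw [rootList_length, h]

lemma mem_rootList {p : Polynomial ℝ} {x : ℝ} : x ∈ rootList p ↔ x ∈ p.roots := by
  rw [← coe_rootList p]; simp

noncomputable def cnt (p : Polynomial ℝ) (x : ℝ) : ℕ := cntL (rootList p) x

lemma cnt_eq_card_filter (p : Polynomial ℝ) (x : ℝ) :
    cnt p x = Multiset.card (p.roots.filter (fun r => r ≤ x)) := by
  rw [← coe_rootList p]
  simp [cnt, cntL, Multiset.filter_coe]

/-- The main combinatorial predicate: counting form of interlacing. -/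
def Good (A B : Polynomial ℝ) : Prop :=
  RealRooted A ∧ RealRooted B ∧ 0 < A.leadingCoeff ∧ 0 < B.leadingCoeff ∧
    ∃ δ : ℕ, δ ≤ 1 ∧ B.natDegree = A.natDegree + δ ∧
      ∀ x, cnt B x ≤ cnt A x + δ ∧ cnt A x + δ ≤ cnt B x + 1

lemma interlaces_iff_good {A B : Polynomial ℝ} (hA : A ≠ 0) (hB : B ≠ 0) :
    Interlaces A B ↔ Good A B := by
  constructor
  · rintro (rfl | rfl | ⟨hBrr, hArr, hlB, hlA, h⟩)
    · exact absurd rfl hA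
    · exact absurd rfl hB
    · refine ⟨hArr, hBrr, hlA, hlB, ?_⟩
      have lA := rootList_length_eq hArr
      have lB := rootList_length_eq hBrr
      rcases h with ⟨hdeg, h1, h2⟩ | ⟨hdeg, h1, h2⟩
      · refine ⟨0, by omega, by omega, fun x => ?_⟩
        constructor
        · have := (idx_iff_cnt_le (rootList_sorted B) (rootList_sorted A)
            (by omega)).1 (by rw [lB, hdeg]; intro i hi; exact h1 i (by omega)) x
          simpa [cnt] using this
        · have := (idx_iff_cnt_shift (rootList_sorted B) (rootList_sorted A)
            (by omega)).1 (by rw [lA]; intro i hi; exact h2 i (by omega)) x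
          simpa [cnt] using this
      · refine ⟨1, le_refl _, by omega, fun x => ?_⟩
        constructor
        · have := (idx_iff_cnt_shift (rootList_sorted A) (rootList_sorted B)
            (by omega)).1 (by rw [lB]; intro i hi; exact h2 i (by omega)) x
          simpa [cnt] using this
        · have := (idx_iff_cnt_le (rootList_sorted A) (rootList_sorted B)
            (by omega)).1 (by rw [lA]; intro i hi; exact h1 i (by omega)) x
          have h' : cnt A x ≤ cnt B x := this
          omega
  · rintro ⟨hArr, hBrr, hlA, hlB, δ, hδ, hdeg, hcnt⟩
    right; right
    refine ⟨hBrr, hArr, hlB, hlA, ?_⟩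
    have lA := rootList_length_eq hArr
    have lB := rootList_length_eq hBrr
    interval_cases δ
    · left
      refine ⟨by omega, ?_, ?_⟩
      · intro i hi
        exact (idx_iff_cnt_le (rootList_sorted B) (rootList_sorted A) (by omega)).2
          (fun x => by have := (hcnt x).1; simpa [cnt] using this) i (by omega)
      · intro i hi
        exact (idx_iff_cnt_shift (rootList_sorted B) (rootList_sorted A) (by omega)).2
          (fun x => by have := (hcnt x).2; simp [cnt] at this ⊢; omega) i (by omega)
    · right
      refine ⟨by omega, ?_, ?_⟩
      · intro i hi
        exact (idx_iff_cnt_le (rootList_sorted A) (rootList_sorted B) (by omega)).2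
          (fun x => by have := (hcnt x).2; simp [cnt] at this ⊢; omega) i (by omega)
      · intro i hi
        exact (idx_iff_cnt_shift (rootList_sorted A) (rootList_sorted B) (by omega)).2
          (fun x => by have := (hcnt x).1; simp [cnt] at this ⊢; omega) i (by omega)

lemma lc_pos_of_nonneg {p : Polynomial ℝ} (hp : p ≠ 0) (h : NonnegCoeffs p) :
    0 < p.leadingCoeff := by
  rcases lt_or_eq_of_le (h p.natDegree) with h' | h'
  · exact h'
  · exact absurd h'.symm (mt leadingCoeff_eq_zero.1 hp)

lemma roots_nonpos {p : Polynomial ℝ} (h : NonnegCoeffs p) (hp : p ≠ 0) :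
    ∀ r ∈ p.roots, r ≤ 0 := by
  intro r hr
  by_contra hpos
  push_neg at hpos
  have hroot : p.eval r = 0 := (Polynomial.mem_roots hp).1 hr
  have : 0 < p.eval r := by
    rw [Polynomial.eval_eq_sum_range]
    have hmem : p.natDegree ∈ Finset.range (p.natDegree + 1) := by simp
    have hle : p.coeff p.natDegree * r ^ p.natDegree ≤
        ∑ i ∈ Finset.range (p.natDegree + 1), p.coeff i * r ^ i :=
      Finset.single_le_sum (fun i _ => mul_nonneg (h i) (pow_nonneg hpos.le i)) hmem
    have : 0 < p.coeff p.natDegree * r ^ p.natDegree :=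
      mul_pos (lc_pos_of_nonneg hp h) (pow_pos hpos _)
    linarith
  linarith [this, hroot.le, hroot.ge]

lemma rootList_smul {u : ℝ} (hu : u ≠ 0) (p : Polynomial ℝ) :
    rootList (u • p) = rootList p := by
  unfold rootList; rw [Polynomial.roots_smul_nonzero p hu]

lemma natDegree_smul' {u : ℝ} (hu : u ≠ 0) (p : Polynomial ℝ) :
    (u • p).natDegree = p.natDegree := by
  rw [Polynomial.smul_eq_C_mul, Polynomial.natDegree_C_mul hu]

lemma leadingCoeff_smul' (u : ℝ) (p : Polynomial ℝ) :
    (u • p).leadingCoeff = u * p.leadingCoeff := by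
  rw [Polynomial.smul_eq_C_mul, Polynomial.leadingCoeff_mul, Polynomial.leadingCoeff_C]

lemma realRooted_smul {u : ℝ} (hu : u ≠ 0) {p : Polynomial ℝ} (h : RealRooted p) :
    RealRooted (u • p) := by
  unfold RealRooted at *
  rw [Polynomial.roots_smul_nonzero p hu, natDegree_smul' hu, h]

lemma cnt_smul {u : ℝ} (hu : u ≠ 0) (p : Polynomial ℝ) (x : ℝ) :
    cnt (u • p) x = cnt p x := by
  unfold cnt; rw [rootList_smul hu]

lemma interlaces_smul_self {p : Polynomial ℝ} (hp : p ≠ 0) (hrr : RealRooted p)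
    (hlc : 0 < p.leadingCoeff) {u v : ℝ} (hu : 0 < u) (hv : 0 < v) :
    Interlaces (u • p) (v • p) := by
  right; right
  have hlen := rootList_length_eq hrr
  refine ⟨realRooted_smul hv.ne' hrr, realRooted_smul hu.ne' hrr, ?_, ?_, Or.inl ⟨?_, ?_, ?_⟩⟩
  · rw [leadingCoeff_smul']; positivity
  · rw [leadingCoeff_smul']; positivity
  · rw [natDegree_smul' hu.ne', natDegree_smul' hv.ne']
  · intro i hi
    rw [rootList_smul hu.ne', rootList_smul hv.ne']
  · intro i hi
    rw [natDegree_smul' hv.ne'] at hi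
    rw [rootList_smul hu.ne', rootList_smul hv.ne']
    exact sorted_getD_mono (rootList_sorted p) (by omega) (by omega)

lemma factor_out {p : Polynomial ℝ} {w : ℝ} (hp : p ≠ 0) (hw : p.IsRoot w) :
    ∃ p₁ : Polynomial ℝ, p = (X - C w) * p₁ ∧ p₁ ≠ 0 ∧ p.roots = w ::ₘ p₁.roots ∧
      p.natDegree = p₁.natDegree + 1 ∧ p.leadingCoeff = p₁.leadingCoeff ∧
      (RealRooted p → RealRooted p₁) := by
  refine ⟨p / (X - C w), (Polynomial.mul_div_eq_iff_isRoot.2 hw).symm, ?_, ?_, ?_, ?_, ?_⟩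
  all_goals {
    have heq := (Polynomial.mul_div_eq_iff_isRoot (a := w) (p := p)).2 hw
    have hne : p / (X - C w) ≠ 0 := by
      intro h0; rw [h0, mul_zero] at heq; exact hp heq.symm
    have hXne : (X - C w : Polynomial ℝ) ≠ 0 := Polynomial.X_sub_C_ne_zero w
    have hroots : p.roots = w ::ₘ (p / (X - C w)).roots := by
      conv_lhs => rw [← heq]
      rw [Polynomial.roots_mul (by rw [heq]; exact hp), Polynomial.roots_X_sub_C]
      rfl
    have hdeg : p.natDegree = (p / (X - C w)).natDegree + 1 := by
      conv_lhs => rw [← heq]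
      rw [Polynomial.natDegree_mul hXne hne, Polynomial.natDegree_X_sub_C]
      omega
    have hlc : p.leadingCoeff = (p / (X - C w)).leadingCoeff := by
      conv_lhs => rw [← heq]
      rw [Polynomial.leadingCoeff_mul, Polynomial.leadingCoeff_X_sub_C, one_mul]
    first
      | exact hne
      | exact hroots
      | exact hdeg
      | exact hlc
      | { intro hrr
          unfold RealRooted at *
          have := congrArg Multiset.card hroots
          simp only [Multiset.card_cons] at this
          omega }
  }

lemma cnt_factor {p p₁ : Polynomial ℝ} {w : ℝ} (hroots : p.roots = w ::ₘ p₁.roots) (x : ℝ) :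
    cnt p x = cnt p₁ x + (if w ≤ x then 1 else 0) := by
  rw [cnt_eq_card_filter, cnt_eq_card_filter, hroots, Multiset.filter_cons]
  by_cases h : w ≤ x <;> simp [h] <;> omega

lemma comb_deg {F G : Polynomial ℝ} {m L : ℕ} (hF : F.natDegree = m) (hG : G.natDegree = L)
    (hmL : m ≤ L) (a b : ℝ) (h : 0 < a * G.leadingCoeff + b * F.coeff L) :
    (a • G + b • F).natDegree = L ∧
      (a • G + b • F).leadingCoeff = a * G.leadingCoeff + b * F.coeff L := by
  have hcoeff : (a • G + b • F).coeff L = a * G.leadingCoeff + b * F.coeff L := by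
    rw [Polynomial.coeff_add, Polynomial.coeff_smul, Polynomial.coeff_smul,
      Polynomial.leadingCoeff, hG]
    simp [smul_eq_mul]
  have hle : (a • G + b • F).natDegree ≤ L :=
    le_trans (Polynomial.natDegree_add_le _ _)
      (max_le (le_trans (Polynomial.natDegree_smul_le _ _) (by omega))
        (le_trans (Polynomial.natDegree_smul_le _ _) (by omega)))
  have hge : L ≤ (a • G + b • F).natDegree :=
    Polynomial.le_natDegree_of_ne_zero (by rw [hcoeff]; exact ne_of_gt h)
  have hdeg : (a • G + b • F).natDegree = L := le_antisymm hle hge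
  exact ⟨hdeg, by rw [Polynomial.leadingCoeff, hdeg, hcoeff]⟩

lemma neg_list_prod : ∀ (l : List ℝ), (∀ y ∈ l, y < 0) →
    ((0 : ℝ) < l.prod ↔ Even l.length) ∧ l.prod ≠ 0
  | [], _ => by simp
  | a :: l, h => by
    obtain ⟨ih1, ih2⟩ := neg_list_prod l (fun y hy => h y (List.mem_cons_of_mem a hy))
    have ha : a < 0 := h a List.mem_cons_self
    rw [List.prod_cons, List.length_cons]
    constructor
    · rw [Nat.even_add_one, ← ih1]
      constructor
      · intro hpos
        intro hP
        nlinarith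
      · intro hP
        rcases lt_trichotomy l.prod 0 with h' | h' | h'
        · nlinarith
        · exact absurd h' ih2
        · exact absurd h' hP
    · exact mul_ne_zero (ne_of_lt ha) ih2

lemma eval_eq_prod {p : Polynomial ℝ} (hrr : RealRooted p) (x : ℝ) :
    p.eval x = p.leadingCoeff * ((rootList p).map (fun r => x - r)).prod := by
  have hsplit : p.Splits := Polynomial.splits_iff_card_roots.2 hrr
  conv_lhs => rw [hsplit.eq_prod_roots]
  rw [Polynomial.eval_mul, Polynomial.eval_C, Polynomial.eval_multiset_prod]
  congr 1
  rw [← coe_rootList p]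
  rw [Multiset.map_coe, Multiset.map_coe, Multiset.prod_coe, List.map_map]
  congr 1
  apply List.map_congr_left
  intro r _
  simp

lemma sign_eval {p : Polynomial ℝ} (hrr : RealRooted p) (hlc : 0 < p.leadingCoeff)
    (x : ℝ) (k : ℕ) (hk : k ≤ (rootList p).length)
    (hlow : ∀ i < k, (rootList p).getD i 0 < x)
    (hhigh : ∀ i, k ≤ i → i < (rootList p).length → x < (rootList p).getD i 0) :
    (0 < p.eval x ↔ Even ((rootList p).length - k)) ∧ p.eval x ≠ 0 := by
  set l := rootList p with hl
  have hsplit : l = l.take k ++ l.drop k := (List.take_append_drop k l).symm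
  have htake : ∀ y ∈ (l.take k).map (fun r => x - r), 0 < y := by
    intro y hy
    obtain ⟨r, hr, rfl⟩ := List.mem_map.1 hy
    obtain ⟨i, hik, hival⟩ := List.mem_take_iff_getElem.1 hr
    have hi : i < k := lt_min_iff.1 hik |>.1
    have hi2 : i < l.length := lt_min_iff.1 hik |>.2
    have h2 := hlow i hi
    rw [List.getD_eq_getElem l 0 hi2, hival] at h2
    linarith
  have hdrop : ∀ y ∈ (l.drop k).map (fun r => x - r), y < 0 := by
    intro y hy
    obtain ⟨r, hr, rfl⟩ := List.mem_map.1 hy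
    obtain ⟨i, hik, hival⟩ := List.mem_drop_iff_getElem.1 hr
    have := hhigh (k + i) (by omega) (by omega)
    rw [List.getD_eq_getElem l 0 (by omega)] at this
    rw [← hival]
    simp only [sub_neg]
    convert this using 2
  have heval : p.eval x = p.leadingCoeff * (((l.take k).map (fun r => x - r)).prod *
      ((l.drop k).map (fun r => x - r)).prod) := by
    rw [eval_eq_prod hrr x, ← hl]
    conv_lhs => rw [hsplit]
    rw [List.map_append, List.prod_append]
  obtain ⟨hd1, hd2⟩ := neg_list_prod _ hdrop
  have htpos : 0 < ((l.take k).map (fun r => x - r)).prod := List.prod_pos htake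
  have hlen : ((l.drop k).map (fun r => x - r)).length = l.length - k := by
    rw [List.length_map, List.length_drop]
  have key : 0 < p.eval x ↔ 0 < ((l.drop k).map (fun r => x - r)).prod := by
    rw [heval, ← mul_assoc]
    exact mul_pos_iff_of_pos_left (mul_pos hlc htpos)
  constructor
  · rw [key, ← hlen, ← hd1]
  · rw [heval]
    exact mul_ne_zero (ne_of_gt hlc) (mul_ne_zero (ne_of_gt htpos) hd2)

lemma mul_neg_of_sign_iff {u v : ℝ} (hu : u ≠ 0) (hv : v ≠ 0) (h : 0 < u ↔ ¬ (0 < v)) :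
    u * v < 0 := by
  rcases lt_or_gt_of_ne hu with h1 | h1 <;> rcases lt_or_gt_of_ne hv with h2 | h2
  · exact absurd (h.2 (by linarith)) (by linarith)
  · exact mul_neg_of_neg_of_pos h1 h2
  · exact mul_neg_of_pos_of_neg h1 h2
  · exact absurd h2 (by have := h.1 h1; linarith)

lemma exists_root_Ioo (p : Polynomial ℝ) {u v : ℝ} (huv : u < v)
    (h : p.eval u * p.eval v < 0) : ∃ z, u < z ∧ z < v ∧ p.IsRoot z := by
  have hc : ContinuousOn (fun x => p.eval x) (Set.Icc u v) := p.continuous.continuousOn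
  rcases mul_neg_iff.1 h with ⟨h1, h2⟩ | ⟨h1, h2⟩
  · obtain ⟨z, hz, hz0⟩ := intermediate_value_Ioo' huv.le hc (Set.mem_Ioo.2 ⟨h2, h1⟩)
    exact ⟨z, hz.1, hz.2, hz0⟩
  · obtain ⟨z, hz, hz0⟩ := intermediate_value_Ioo huv.le hc (Set.mem_Ioo.2 ⟨h1, h2⟩)
    exact ⟨z, hz.1, hz.2, hz0⟩

lemma exists_left (R : Polynomial ℝ) (hlc : 0 < R.leadingCoeff) (hdeg : R.natDegree ≠ 0)
    (y : ℝ) : ∃ x, x < y ∧ (0 < R.eval x ↔ Even R.natDegree) ∧ R.eval x ≠ 0 := by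
  set S := R.comp (C y - X) with hS
  have hqdeg : (C y - X : Polynomial ℝ).natDegree = 1 := by
    rw [show (C y - X : Polynomial ℝ) = -(X - C y) by ring, Polynomial.natDegree_neg,
      Polynomial.natDegree_X_sub_C]
  have hSdeg : S.natDegree = R.natDegree := by
    rw [hS, Polynomial.natDegree_comp, hqdeg, mul_one]
  have hqlc : (C y - X : Polynomial ℝ).leadingCoeff = -1 := by
    rw [show (C y - X : Polynomial ℝ) = -(X - C y) by ring, Polynomial.leadingCoeff_neg,
      Polynomial.leadingCoeff_X_sub_C]
  have hSlc : S.leadingCoeff = R.leadingCoeff * (-1) ^ R.natDegree := by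
    rw [hS, Polynomial.leadingCoeff_comp (by rw [hqdeg]; norm_num), hqlc]
  have hSdegpos : 0 < S.degree := by
    apply Polynomial.natDegree_pos_iff_degree_pos.1
    omega
  have heval : ∀ z : ℝ, S.eval z = R.eval (y - z) := by
    intro z
    rw [hS, Polynomial.eval_comp]
    simp
  by_cases hpar : Even R.natDegree
  · have hSlcpos : 0 ≤ S.leadingCoeff := by
      rw [hSlc, hpar.neg_one_pow, mul_one]; exact hlc.le
    have htend := Polynomial.tendsto_atTop_of_leadingCoeff_nonneg S hSdegpos hSlcpos
    obtain ⟨z, hz1, hz2⟩ := ((htend.eventually_gt_atTop 0).and (Filter.eventually_gt_atTop 0)).exists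
    refine ⟨y - z, by linarith, ?_, ?_⟩
    · rw [← heval z]; simp only [hpar, iff_true]; exact hz1
    · rw [← heval z]; exact ne_of_gt hz1
  · have hSlcneg : S.leadingCoeff ≤ 0 := by
      rw [hSlc, (Nat.not_even_iff_odd.1 hpar).neg_one_pow, mul_neg_one]
      linarith
    have htend := Polynomial.tendsto_atBot_of_leadingCoeff_nonpos S hSdegpos hSlcneg
    obtain ⟨z, hz1, hz2⟩ := ((htend.eventually_lt_atBot 0).and (Filter.eventually_gt_atTop 0)).exists
    refine ⟨y - z, by linarith, ?_, ?_⟩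
    · rw [← heval z]
      constructor
      · intro h; linarith
      · intro h; exact absurd h hpar
    · rw [← heval z]; exact ne_of_lt hz1

lemma roots_of_strictMono {n : ℕ} (R : Polynomial ℝ) (hR0 : R ≠ 0) (hdeg : R.natDegree = n)
    (r : Fin n → ℝ) (hmono : StrictMono r) (hroot : ∀ j, R.IsRoot (r j)) :
    RealRooted R ∧ rootList R = List.ofFn r := by
  classical
  set l := List.ofFn r with hl
  have hnodup : l.Nodup := List.nodup_ofFn.2 hmono.injective
  have hsub : (↑l : Multiset ℝ) ≤ R.roots := by
    rw [Multiset.le_iff_count]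
    intro z
    by_cases hz : z ∈ l
    · have h1 : (↑l : Multiset ℝ).count z = 1 := by
        rw [Multiset.coe_count]
        exact List.count_eq_one_of_mem hnodup hz
      obtain ⟨j, hj⟩ := Set.mem_range.1 ((List.mem_ofFn' r z).1 (hl ▸ hz))
      have h2 : z ∈ R.roots := (Polynomial.mem_roots hR0).2 (hj ▸ hroot j)
      rw [h1]
      exact Multiset.one_le_count_iff_mem.2 h2
    · rw [Multiset.coe_count, List.count_eq_zero_of_not_mem hz]
      exact Nat.zero_le _
  have hcardl : Multiset.card (↑l : Multiset ℝ) = n := by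
    simp [hl]
  have hcard : Multiset.card R.roots ≤ n := hdeg ▸ Polynomial.card_roots' R
  have heq : (↑l : Multiset ℝ) = R.roots :=
    Multiset.eq_of_le_of_card_le hsub (by omega)
  have hrr : RealRooted R := by
    unfold RealRooted
    rw [← heq, hcardl, hdeg]
  refine ⟨hrr, ?_⟩
  have hperm : (rootList R).Perm l := by
    rw [← Multiset.coe_eq_coe, coe_rootList, ← heq]
  have hsorted : l.Pairwise (· ≤ ·) := by
    rw [hl]
    exact List.pairwise_ofFn.2 (fun i j hij => (hmono hij).le)
  exact List.Perm.eq_of_pairwise' (rootList_sorted R) hsorted hperm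

lemma getD_rootList_isRoot {p : Polynomial ℝ} (hp : p ≠ 0) {j : ℕ}
    (hj : j < (rootList p).length) : p.IsRoot ((rootList p).getD j 0) := by
  rw [List.getD_eq_getElem _ 0 hj]
  have hmem : (rootList p)[j] ∈ rootList p := List.getElem_mem _
  exact (Polynomial.mem_roots hp).1 (mem_rootList.1 hmem)

lemma locate {F G : Polynomial ℝ} (hGrr : RealRooted G) (hG0 : G ≠ 0)
    {L : ℕ} (hL : G.natDegree = L) (hL1 : 1 ≤ L)
    (HS : ∀ j, j < L → ((0 < F.eval ((rootList G).getD j 0) ↔ Even (L - 1 - j)) ∧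
          F.eval ((rootList G).getD j 0) ≠ 0))
    {α β : ℝ} (hβ : 0 < β)
    {R : Polynomial ℝ} (hR : R = α • G + β • F)
    (hRlc : 0 < R.leadingCoeff) (hRdeg : R.natDegree = L) :
    RealRooted R ∧
    (∀ j, j < L → (rootList R).getD j 0 < (rootList G).getD j 0) ∧
    (∀ j, j + 1 < L → (rootList G).getD j 0 < (rootList R).getD (j + 1) 0) := by
  classical
  have htlen : (rootList G).length = L := by rw [rootList_length_eq hGrr, hL]
  set t : ℕ → ℝ := fun j => (rootList G).getD j 0 with ht
  have htroot : ∀ j, j < L → G.IsRoot (t j) := fun j hj =>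
    getD_rootList_isRoot hG0 (by omega)
  have hRt : ∀ j, j < L → R.eval (t j) = β * F.eval (t j) := by
    intro j hj
    rw [hR]
    simp only [Polynomial.eval_add, Polynomial.eval_smul, smul_eq_mul]
    rw [htroot j hj]
    ring
  have hsign : ∀ j, j < L → ((0 < R.eval (t j) ↔ Even (L - 1 - j)) ∧ R.eval (t j) ≠ 0) := by
    intro j hj
    rw [hRt j hj]
    refine ⟨Iff.trans (mul_pos_iff_of_pos_left hβ) (HS j hj).1, ?_⟩
    exact mul_ne_zero (ne_of_gt hβ) (HS j hj).2
  have hadj : ∀ j, j + 1 < L → R.eval (t j) * R.eval (t (j + 1)) < 0 := by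
    intro j hj
    apply mul_neg_of_sign_iff (hsign j (by omega)).2 (hsign (j+1) (by omega)).2
    rw [(hsign j (by omega)).1, (hsign (j+1) (by omega)).1]
    have harith : L - 1 - j = (L - 1 - (j + 1)) + 1 := by omega
    rw [harith, Nat.even_add_one]
  have htmono : ∀ i j, i ≤ j → j < L → t i ≤ t j := by
    intro i j hij hj
    exact sorted_getD_mono (rootList_sorted G) hij (by omega)
  have htstrict : ∀ j, j + 1 < L → t j < t (j + 1) := by
    intro j hj
    rcases lt_or_eq_of_le (htmono j (j+1) (by omega) hj) with h | h
    · exact h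
    · exfalso
      have := hadj j hj
      rw [h] at this
      nlinarith
  obtain ⟨xm, hxm1, hxm2, hxm3⟩ := exists_left R hRlc (by omega) (t 0)
  have hleft : R.eval xm * R.eval (t 0) < 0 := by
    apply mul_neg_of_sign_iff hxm3 (hsign 0 (by omega)).2
    rw [hxm2, (hsign 0 (by omega)).1, hRdeg]
    have harith : L = (L - 1 - 0) + 1 := by omega
    conv_lhs => rw [harith]
    rw [Nat.even_add_one]
  have Hex : ∀ j : Fin L, ∃ z, R.IsRoot z ∧ z < t (j : ℕ) ∧
      (∀ j' : ℕ, (j : ℕ) = j' + 1 → t j' < z) := by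
    rintro ⟨j, hj⟩
    cases j with
    | zero =>
      obtain ⟨z, hz1, hz2, hz3⟩ := exists_root_Ioo R hxm1 hleft
      exact ⟨z, hz3, hz2, fun j' h => by simp only [Fin.val_mk] at h; omega⟩
    | succ j' =>
      obtain ⟨z, hz1, hz2, hz3⟩ := exists_root_Ioo R (htstrict j' hj) (hadj j' hj)
      refine ⟨z, hz3, hz2, fun j'' h => ?_⟩
      simp only [Fin.val_mk] at h
      have : j'' = j' := by omega
      rw [this]; exact hz1
  choose r hr using Hex
  have hmono : StrictMono r := by
    intro i j hij
    have hijn : (i : ℕ) < (j : ℕ) := hij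
    have h1 : r i < t (i : ℕ) := (hr i).2.1
    have h2 : t ((j : ℕ) - 1) < r j := (hr j).2.2 _ (by omega)
    have h3 : t (i : ℕ) ≤ t ((j : ℕ) - 1) := htmono _ _ (by omega) (by omega)
    linarith
  have hR0 : R ≠ 0 := Polynomial.leadingCoeff_ne_zero.1 (ne_of_gt hRlc)
  obtain ⟨hrr, hlist⟩ := roots_of_strictMono R hR0 hRdeg r hmono (fun j => (hr j).1)
  have hget : ∀ j, (hj : j < L) → (rootList R).getD j 0 = r ⟨j, hj⟩ := by
    intro j hj
    rw [hlist, List.getD_eq_getElem _ 0 (by simpa using hj)]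
    simp
  refine ⟨hrr, ?_, ?_⟩
  · intro j hj
    rw [hget j hj]
    exact (hr ⟨j, hj⟩).2.1
  · intro j hj
    rw [hget (j+1) hj]
    exact (hr ⟨j+1, hj⟩).2.2 j rfl

lemma pin_root {Qp : Polynomial ℝ} (hQ0 : Qp ≠ 0) {L : ℕ}
    (hqlen : (rootList Qp).length = L) (tf : ℕ → ℝ)
    (htmono : ∀ i j, i ≤ j → j < L → tf i ≤ tf j)
    (hq_ub : ∀ j, j < L → (rootList Qp).getD j 0 ≤ tf j)
    (hq_lb : ∀ j, j + 1 < L → tf j < (rootList Qp).getD (j + 1) 0)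
    {i : ℕ} (hi : i < L) {z : ℝ} (hz : Qp.IsRoot z)
    (hlow : ∀ n, n < i → tf n < z) (hhigh : z < tf i) :
    (rootList Qp).getD i 0 = z := by
  have hzmem : z ∈ rootList Qp := mem_rootList.2 ((Polynomial.mem_roots hQ0).2 hz)
  obtain ⟨n, hn, hzn⟩ := List.mem_iff_getElem.1 hzmem
  have hqn : (rootList Qp).getD n 0 = z := by rw [List.getD_eq_getElem _ 0 hn, hzn]
  have hnL : n < L := by omega
  rcases lt_trichotomy n i with h | h | h
  · exfalso
    have h1 : (rootList Qp).getD n 0 ≤ tf n := hq_ub n hnL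
    have h2 : tf n < z := hlow n h
    rw [hqn] at h1
    linarith
  · rw [← h, hqn]
  · exfalso
    have h1 : tf (n - 1) < (rootList Qp).getD n 0 := by
      have := hq_lb (n - 1) (by omega)
      have heq : n - 1 + 1 = n := by omega
      rwa [heq] at this
    have h2 : tf i ≤ tf (n - 1) := htmono i (n - 1) (by omega) (by omega)
    rw [hqn] at h1
    linarith

set_option maxHeartbeats 1000000 in
lemma baseCase {F G : Polynomial ℝ} (hF0 : F ≠ 0) (hG0 : G ≠ 0) (hgood : Good F G)
    (hcop : ∀ w : ℝ, ¬(F.IsRoot w ∧ G.IsRoot w))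
    {a b c d : ℝ} (ha : 0 ≤ a) (hb : 0 < b) (hc : 0 < c) (hd : 0 ≤ d)
    (hdet : a * d ≤ b * c) :
    Good (a • G + b • F) (c • G + d • F) := by
  classical
  obtain ⟨hFrr, hGrr, hlF, hlG, δ, hδ, hdegFG, hcnt⟩ := hgood
  set m := F.natDegree with hm
  set L := G.natDegree with hL
  have hslen : (rootList F).length = m := rootList_length_eq hFrr
  have htlen : (rootList G).length = L := rootList_length_eq hGrr
  set s : ℕ → ℝ := fun j => (rootList F).getD j 0 with hsdef
  set t : ℕ → ℝ := fun j => (rootList G).getD j 0 with htdef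
  have hsroot : ∀ j, j < m → F.IsRoot (s j) := fun j hj =>
    getD_rootList_isRoot hF0 (by omega)
  have htroot : ∀ j, j < L → G.IsRoot (t j) := fun j hj =>
    getD_rootList_isRoot hG0 (by omega)
  have hst_ne : ∀ i j, i < m → j < L → s i ≠ t j := by
    intro i j hi hj heq
    exact hcop (s i) ⟨hsroot i hi, heq ▸ htroot j hj⟩
  have hsmono : ∀ i j, i ≤ j → j < m → s i ≤ s j := fun i j hij hj =>
    sorted_getD_mono (rootList_sorted F) hij (by omega)
  have htmono : ∀ i j, i ≤ j → j < L → t i ≤ t j := fun i j hij hj =>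
    sorted_getD_mono (rootList_sorted G) hij (by omega)
  -- the uniform strict grid facts
  have Hlow : ∀ j, j < L → ∀ i, i + δ < j + 1 → s i < t j := by
    intro j hj i hij
    rcases Nat.lt_or_ge δ 1 with h0 | h1
    · -- δ = 0
      have hδ0 : δ = 0 := by omega
      have hmL : m = L := by omega
      have p1 : ∀ i < L, s i ≤ t i := by
        have := (idx_iff_cnt_le (rootList_sorted G) (rootList_sorted F) (by omega)).2
          (fun x => by have := (hcnt x).1; unfold cnt at this; simp only [hδ0, add_zero] at this; exact this)
        intro i hi; exact this i (by omega)
      have hile : i ≤ j := by omega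
      have h2 : s i ≤ s j := hsmono i j hile (by omega)
      have h3 : s j < t j := lt_of_le_of_ne (p1 j hj) (hst_ne j j (by omega) hj)
      linarith
    · -- δ = 1
      have hδ1 : δ = 1 := by omega
      have hmL : L = m + 1 := by omega
      have p2 : ∀ i, i + 1 < L → s i ≤ t (i + 1) := by
        have := (idx_iff_cnt_shift (rootList_sorted F) (rootList_sorted G) (by omega)).2
          (fun x => by have := (hcnt x).1; unfold cnt at this; simp only [hδ1] at this; omega)
        intro i hi; exact this i (by omega)
      have hij' : i + 1 ≤ j := by omega
      have h2 : s i < t (i + 1) :=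
        lt_of_le_of_ne (p2 i (by omega)) (hst_ne i (i+1) (by omega) (by omega))
      have h3 : t (i + 1) ≤ t j := htmono (i+1) j hij' hj
      linarith
  have Hhigh : ∀ j, j < L → ∀ i, j + 1 ≤ i + δ → i < m → t j < s i := by
    intro j hj i hij him
    rcases Nat.lt_or_ge δ 1 with h0 | h1
    · have hδ0 : δ = 0 := by omega
      have hmL : m = L := by omega
      have p2 : ∀ i, i + 1 < m → t i ≤ s (i + 1) := by
        have := (idx_iff_cnt_shift (rootList_sorted G) (rootList_sorted F) (by omega)).2
          (fun x => by have := (hcnt x).2; unfold cnt at this; simp only [hδ0, add_zero] at this; omega)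
        intro i hi; exact this i (by omega)
      have hji : j + 1 ≤ i := by omega
      have h2 : t j < s (j + 1) :=
        lt_of_le_of_ne (p2 j (by omega)) (Ne.symm (hst_ne (j+1) j (by omega) hj))
      have h3 : s (j + 1) ≤ s i := hsmono (j+1) i hji him
      linarith
    · have hδ1 : δ = 1 := by omega
      have p1 : ∀ i < m, t i ≤ s i := by
        have := (idx_iff_cnt_le (rootList_sorted F) (rootList_sorted G) (by omega)).2
          (fun x => by have := (hcnt x).2; unfold cnt at this; simp only [hδ1] at this; omega)
        intro i hi; exact this i (by omega)
      have h2 : t j ≤ t i := htmono j i (by omega) (by omega)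
      have h3 : t i < s i := lt_of_le_of_ne (p1 i him) (Ne.symm (hst_ne i i him (by omega)))
      linarith
  have htstrict : ∀ j, j + 1 < L → t j < t (j + 1) := by
    intro j hj
    rcases Nat.lt_or_ge δ 1 with h0 | h1
    · have h2 : t j < s (j + 1) := Hhigh j (by omega) (j + 1) (by omega) (by omega)
      have h3 : s (j + 1) < t (j + 1) := Hlow (j + 1) hj (j + 1) (by omega)
      linarith
    · have h2 : t j < s j := Hhigh j (by omega) j (by omega) (by omega)
      have h3 : s j < t (j + 1) := Hlow (j + 1) hj j (by omega)
      linarith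
  have HSF : ∀ j, j < L → ((0 < F.eval (t j) ↔ Even (L - 1 - j)) ∧ F.eval (t j) ≠ 0) := by
    intro j hj
    have h := sign_eval hFrr hlF (t j) (j + 1 - δ) (by omega)
      (fun i hi => Hlow j hj i (by omega))
      (fun i hi1 hi2 => Hhigh j hj i (by omega) (by omega))
    rwa [hslen, show m - (j + 1 - δ) = L - 1 - j by omega] at h
  have HSG : ∀ (x : ℝ) (i : ℕ), i < L → (∀ i', i' < i → t i' < x) → x < t i →
      ((0 < G.eval x ↔ Even (L - i)) ∧ G.eval x ≠ 0) := by
    intro x i hi hlo hhi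
    have h := sign_eval hGrr hlG x i (by omega) (fun i' hi' => hlo i' hi')
      (fun i' h1 h2 => lt_of_lt_of_le hhi (htmono i i' h1 (by omega)))
    rwa [htlen] at h
  have hcF0 : δ = 0 → F.coeff L = F.leadingCoeff := by
    intro h
    rw [show L = m by omega, Polynomial.leadingCoeff, ← hm]
  have hcF1 : δ = 1 → F.coeff L = 0 := fun h =>
    Polynomial.coeff_eq_zero_of_natDegree_lt (by omega)
  have hcFnn : 0 ≤ F.coeff L := by
    rcases Nat.lt_or_ge δ 1 with h0 | h1
    · rw [hcF0 (by omega)]; exact hlF.le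
    · rw [hcF1 (by omega)]
  rcases Nat.eq_zero_or_pos L with hL0 | hL1
  · -- constants case
    have hδ0 : δ = 0 := by omega
    obtain ⟨hPdeg, hPlc⟩ := comb_deg hm.symm hL.symm (by omega) a b
      (by rw [hcF0 hδ0]; linarith [mul_nonneg ha hlG.le, mul_pos hb hlF])
    obtain ⟨hQdeg, hQlc⟩ := comb_deg hm.symm hL.symm (by omega) c d
      (by rw [hcF0 hδ0]; linarith [mul_pos hc hlG, mul_nonneg hd hlF.le])
    have hProots : (a • G + b • F).roots = 0 := by
      have h1 := Polynomial.card_roots' (a • G + b • F)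
      rw [hPdeg, hL0] at h1
      exact Multiset.card_eq_zero.1 (by omega)
    have hQroots : (c • G + d • F).roots = 0 := by
      have h1 := Polynomial.card_roots' (c • G + d • F)
      rw [hQdeg, hL0] at h1
      exact Multiset.card_eq_zero.1 (by omega)
    refine ⟨?_, ?_, ?_, ?_, 0, by omega, by omega, fun x => ?_⟩
    · unfold RealRooted; rw [hProots, hPdeg, hL0]; rfl
    · unfold RealRooted; rw [hQroots, hQdeg, hL0]; rfl
    · rw [hPlc, hcF0 hδ0]; linarith [mul_nonneg ha hlG.le, mul_pos hb hlF]
    · rw [hQlc, hcF0 hδ0]; linarith [mul_pos hc hlG, mul_nonneg hd hlF.le]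
    · rw [cnt_eq_card_filter, cnt_eq_card_filter, hProots, hQroots]
      simp
  -- main case : L ≥ 1
  obtain ⟨hQdeg, hQlc⟩ := comb_deg hm.symm hL.symm (by omega) c d
    (by linarith [mul_pos hc hlG, mul_nonneg hd hcFnn])
  have hQlcpos : 0 < (c • G + d • F).leadingCoeff := by
    rw [hQlc]; linarith [mul_pos hc hlG, mul_nonneg hd hcFnn]
  have hQ0 : (c • G + d • F) ≠ 0 := Polynomial.leadingCoeff_ne_zero.1 (ne_of_gt hQlcpos)
  have hQdata : RealRooted (c • G + d • F) ∧
      (∀ j, j < L → (rootList (c • G + d • F)).getD j 0 ≤ t j) ∧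
      (∀ j, j + 1 < L → t j < (rootList (c • G + d • F)).getD (j + 1) 0) ∧
      (d = 0 → ∀ j, j < L → (rootList (c • G + d • F)).getD j 0 = t j) := by
    rcases eq_or_lt_of_le hd with hd0 | hdpos
    · have hQc : c • G + d • F = c • G := by rw [← hd0]; simp
      rw [hQc, rootList_smul hc.ne']
      exact ⟨realRooted_smul hc.ne' hGrr, fun j hj => le_refl _,
        fun j hj => htstrict j hj, fun _ j hj => rfl⟩
    · obtain ⟨hQrr, hub, hlb⟩ := locate hGrr hG0 hL.symm hL1 HSF hdpos rfl hQlcpos hQdeg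
      exact ⟨hQrr, fun j hj => (hub j hj).le, hlb,
        fun hd0' => absurd hd0'.symm (ne_of_lt hdpos)⟩
  obtain ⟨hQrr, hq_ub, hq_lb, hq_eq⟩ := hQdata
  have hqlen : (rootList (c • G + d • F)).length = L := by
    rw [rootList_length_eq hQrr, hQdeg]
  by_cases hshape : a = 0 ∧ δ = 1
  · -- shape B : P = b•F with deg F = L - 1
    obtain ⟨ha0, hδ1⟩ := hshape
    have hPf : a • G + b • F = b • F := by rw [ha0]; simp
    have hPrr : RealRooted (a • G + b • F) := by rw [hPf]; exact realRooted_smul hb.ne' hFrr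
    have hPdeg : (a • G + b • F).natDegree = m := by rw [hPf, natDegree_smul' hb.ne']
    have hPlc : 0 < (a • G + b • F).leadingCoeff := by
      rw [hPf, leadingCoeff_smul']; linarith [mul_pos hb hlF]
    have hproot : rootList (a • G + b • F) = rootList F := by rw [hPf, rootList_smul hb.ne']
    have hplen : (rootList (a • G + b • F)).length = m := by rw [hproot, hslen]
    have chain1 : ∀ i, i < m → (rootList (c • G + d • F)).getD i 0 ≤
        (rootList (a • G + b • F)).getD i 0 := by
      intro i hi
      rw [hproot]
      have h1 : (rootList (c • G + d • F)).getD i 0 ≤ t i := hq_ub i (by omega)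
      have h2 : t i < s i := Hhigh i (by omega) i (by omega) hi
      have : (rootList F).getD i 0 = s i := rfl
      rw [this]; linarith
    have chain2 : ∀ i, i + 1 < L → (rootList (a • G + b • F)).getD i 0 ≤
        (rootList (c • G + d • F)).getD (i + 1) 0 := by
      intro i hi
      have hsp : (rootList (a • G + b • F)).getD i 0 = s i := by rw [hproot]
      rcases eq_or_lt_of_le hd with hd0 | hdpos
      · rw [hsp, hq_eq hd0.symm (i + 1) hi]
        exact (Hlow (i + 1) hi i (by omega)).le
      · have him : i < m := by omega
        have hsi_lb : t i < s i := Hhigh i (by omega) i (by omega) him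
        have hsi_ub : s i < t (i + 1) := Hlow (i + 1) hi i (by omega)
        have hlogrid : ∀ n, n < i + 1 → t n < s i := fun n hn =>
          lt_of_le_of_lt (htmono n i (by omega) (by omega)) hsi_lb
        obtain ⟨hGiff, hGne⟩ := HSG (s i) (i + 1) hi hlogrid hsi_ub
        have hFsi : F.eval (s i) = 0 := hsroot i him
        have hQsi : (c • G + d • F).eval (s i) = c * G.eval (s i) := by
          simp only [Polynomial.eval_add, Polynomial.eval_smul, smul_eq_mul]
          rw [hFsi]; ring
        have hQsne : (c • G + d • F).eval (s i) ≠ 0 := by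
          rw [hQsi]; exact mul_ne_zero (ne_of_gt hc) hGne
        have hQsiff : 0 < (c • G + d • F).eval (s i) ↔ Even (L - (i + 1)) := by
          rw [hQsi]; exact (mul_pos_iff_of_pos_left hc).trans hGiff
        have hFt : G.eval (t (i + 1)) = 0 := htroot (i + 1) hi
        have hQt : (c • G + d • F).eval (t (i + 1)) = d * F.eval (t (i + 1)) := by
          simp only [Polynomial.eval_add, Polynomial.eval_smul, smul_eq_mul]
          rw [hFt]; ring
        have hQtne : (c • G + d • F).eval (t (i + 1)) ≠ 0 := by
          rw [hQt]; exact mul_ne_zero (ne_of_gt hdpos) (HSF (i + 1) hi).2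
        have hQtiff : 0 < (c • G + d • F).eval (t (i + 1)) ↔ Even (L - 1 - (i + 1)) := by
          rw [hQt]; exact (mul_pos_iff_of_pos_left hdpos).trans (HSF (i + 1) hi).1
        have hprod : (c • G + d • F).eval (s i) * (c • G + d • F).eval (t (i + 1)) < 0 := by
          apply mul_neg_of_sign_iff hQsne hQtne
          rw [hQsiff, hQtiff, show L - (i + 1) = (L - 1 - (i + 1)) + 1 by omega,
            Nat.even_add_one]
        obtain ⟨z, hz1, hz2, hz3⟩ := exists_root_Ioo _ hsi_ub hprod
        have hpin := pin_root hQ0 hqlen t htmono hq_ub hq_lb hi hz3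
          (fun n hn => lt_trans (hlogrid n hn) hz1) hz2
        rw [hsp, hpin]; linarith
    refine ⟨hPrr, hQrr, hPlc, hQlcpos, 1, le_refl _, by omega, fun x => ?_⟩
    constructor
    · have := (idx_iff_cnt_shift (rootList_sorted (a • G + b • F))
        (rootList_sorted (c • G + d • F)) (by omega)).1
        (fun i hi => chain2 i (by omega)) x
      unfold cnt; omega
    · have := (idx_iff_cnt_le (rootList_sorted (a • G + b • F))
        (rootList_sorted (c • G + d • F)) (by omega)).1
        (fun i hi => chain1 i (by omega)) x
      unfold cnt; omega
  · -- shape A : deg P = L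
    have hPdata : (a • G + b • F).natDegree = L ∧ 0 < (a • G + b • F).leadingCoeff ∧
        RealRooted (a • G + b • F) ∧
        (∀ j, j < L → (rootList (a • G + b • F)).getD j 0 < t j) ∧
        (∀ j, j + 1 < L → t j < (rootList (a • G + b • F)).getD (j + 1) 0) := by
      rcases eq_or_lt_of_le ha with ha0 | hapos
      · have hδ0 : δ = 0 := by
          rcases Nat.lt_or_ge δ 1 with h | h
          · omega
          · exact absurd ⟨ha0.symm, by omega⟩ hshape
        have hmL : m = L := by omega
        have hPf : a • G + b • F = b • F := by rw [← ha0]; simp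
        refine ⟨by rw [hPf, natDegree_smul' hb.ne']; omega,
          by rw [hPf, leadingCoeff_smul']; linarith [mul_pos hb hlF],
          by rw [hPf]; exact realRooted_smul hb.ne' hFrr, ?_, ?_⟩
        · intro j hj
          rw [hPf, rootList_smul hb.ne']
          exact Hlow j hj j (by omega)
        · intro j hj
          rw [hPf, rootList_smul hb.ne']
          exact Hhigh j (by omega) (j + 1) (by omega) (by omega)
      · obtain ⟨hPdeg, hPlc⟩ := comb_deg hm.symm hL.symm (by omega) a b
          (by linarith [mul_pos hapos hlG, mul_nonneg hb.le hcFnn])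
        have hPlcpos : 0 < (a • G + b • F).leadingCoeff := by
          rw [hPlc]; linarith [mul_pos hapos hlG, mul_nonneg hb.le hcFnn]
        obtain ⟨hPrr, hub, hlb⟩ := locate hGrr hG0 hL.symm hL1 HSF hb rfl hPlcpos hPdeg
        exact ⟨hPdeg, hPlcpos, hPrr, hub, hlb⟩
    obtain ⟨hPdeg, hPlcpos, hPrr, hpub, hplb⟩ := hPdata
    have hP0 : (a • G + b • F) ≠ 0 := Polynomial.leadingCoeff_ne_zero.1 (ne_of_gt hPlcpos)
    have hplen : (rootList (a • G + b • F)).length = L := by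
      rw [rootList_length_eq hPrr, hPdeg]
    have chain1 : ∀ i, i < L → (rootList (a • G + b • F)).getD i 0 ≤
        (rootList (c • G + d • F)).getD i 0 := by
      intro i hi
      rcases eq_or_lt_of_le hd with hd0 | hdpos
      · rw [hq_eq hd0.symm i hi]
        exact (hpub i hi).le
      · rcases eq_or_lt_of_le hdet with hbc | hbclt
        · have hprop : b • (c • G + d • F) = d • (a • G + b • F) := by
            rw [smul_add, smul_add, smul_smul, smul_smul, smul_smul, smul_smul]
            rw [show b * c = d * a by linarith, show b * d = d * b by ring]
          have hq_eq_p : rootList (c • G + d • F) = rootList (a • G + b • F) := by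
            rw [← rootList_smul hb.ne' (c • G + d • F), hprop,
              rootList_smul (ne_of_gt hdpos)]
          rw [hq_eq_p]
        · have hlogrid : ∀ i', i' < i → t i' < (rootList (a • G + b • F)).getD i 0 := by
            intro i' hi'
            have h1 : t (i - 1) < (rootList (a • G + b • F)).getD i 0 := by
              have := hplb (i - 1) (by omega)
              rwa [show i - 1 + 1 = i by omega] at this
            exact lt_of_le_of_lt (htmono i' (i - 1) (by omega) (by omega)) h1
          obtain ⟨hGiff, hGne⟩ := HSG _ i hi hlogrid (hpub i hi)
          have hProoti : (a • G + b • F).eval ((rootList (a • G + b • F)).getD i 0) = 0 :=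
            getD_rootList_isRoot hP0 (by omega)
          have hPev : a * G.eval ((rootList (a • G + b • F)).getD i 0) +
              b * F.eval ((rootList (a • G + b • F)).getD i 0) = 0 := by
            simpa [Polynomial.eval_add, Polynomial.eval_smul, smul_eq_mul] using hProoti
          have hQpi : (c • G + d • F).eval ((rootList (a • G + b • F)).getD i 0) * b =
              (b * c - a * d) * G.eval ((rootList (a • G + b • F)).getD i 0) := by
            simp only [Polynomial.eval_add, Polynomial.eval_smul, smul_eq_mul]
            linear_combination (d : ℝ) * hPev
          have hbcad : 0 < b * c - a * d := by linarith
          have hQine : (c • G + d • F).eval ((rootList (a • G + b • F)).getD i 0) ≠ 0 := by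
            intro h0
            rw [h0, zero_mul] at hQpi
            exact hGne (by
              have := hQpi.symm
              rcases mul_eq_zero.1 this with h | h
              · exact absurd h (ne_of_gt hbcad)
              · exact h)
          have hQiff : 0 < (c • G + d • F).eval ((rootList (a • G + b • F)).getD i 0) ↔
              Even (L - i) := by
            rw [← hGiff]
            constructor
            · intro h
              have h2 : 0 < (c • G + d • F).eval ((rootList (a • G + b • F)).getD i 0) * b :=
                mul_pos h hb
              rw [hQpi] at h2
              exact (mul_pos_iff_of_pos_left hbcad).1 h2
            · intro h
              have h2 : 0 < (b * c - a * d) * G.eval ((rootList (a • G + b • F)).getD i 0) :=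
                mul_pos hbcad h
              rw [← hQpi] at h2
              exact (mul_pos_iff_of_pos_right hb).1 h2
          have hFt : G.eval (t i) = 0 := htroot i hi
          have hQt : (c • G + d • F).eval (t i) = d * F.eval (t i) := by
            simp only [Polynomial.eval_add, Polynomial.eval_smul, smul_eq_mul]
            rw [hFt]; ring
          have hQtne : (c • G + d • F).eval (t i) ≠ 0 := by
            rw [hQt]; exact mul_ne_zero (ne_of_gt hdpos) (HSF i hi).2
          have hQtiff : 0 < (c • G + d • F).eval (t i) ↔ Even (L - 1 - i) := by
            rw [hQt]; exact (mul_pos_iff_of_pos_left hdpos).trans (HSF i hi).1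
          have hprod : (c • G + d • F).eval ((rootList (a • G + b • F)).getD i 0) *
              (c • G + d • F).eval (t i) < 0 := by
            apply mul_neg_of_sign_iff hQine hQtne
            rw [hQiff, hQtiff, show L - i = (L - 1 - i) + 1 by omega, Nat.even_add_one]
          obtain ⟨z, hz1, hz2, hz3⟩ := exists_root_Ioo _ (hpub i hi) hprod
          have hpin := pin_root hQ0 hqlen t htmono hq_ub hq_lb hi hz3
            (fun n hn => lt_trans (hlogrid n hn) hz1) hz2
          rw [hpin]; linarith
    have chain2 : ∀ i, i + 1 < L → (rootList (c • G + d • F)).getD i 0 ≤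
        (rootList (a • G + b • F)).getD (i + 1) 0 := by
      intro i hi
      have h1 : (rootList (c • G + d • F)).getD i 0 ≤ t i := hq_ub i (by omega)
      have h2 : t i < (rootList (a • G + b • F)).getD (i + 1) 0 := hplb i hi
      linarith
    refine ⟨hPrr, hQrr, hPlcpos, hQlcpos, 0, by omega, by omega, fun x => ?_⟩
    constructor
    · have := (idx_iff_cnt_le (rootList_sorted (c • G + d • F))
        (rootList_sorted (a • G + b • F)) (by omega)).1
        (fun i hi => chain1 i (by omega)) x
      unfold cnt; omega
    · have := (idx_iff_cnt_shift (rootList_sorted (c • G + d • F))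
        (rootList_sorted (a • G + b • F)) (by omega)).1
        (fun i hi => chain2 i (by omega)) x
      unfold cnt; omega

lemma cnt_all {p : Polynomial ℝ} (hrr : RealRooted p) {x : ℝ} (h : ∀ r ∈ p.roots, r ≤ x) :
    cnt p x = p.natDegree := by
  rw [cnt_eq_card_filter, Multiset.filter_eq_self.2 h, hrr]

lemma mainAux : ∀ (n : ℕ) (F G : Polynomial ℝ), F.natDegree ≤ n → F ≠ 0 → G ≠ 0 →
    Good F G → ∀ a b c d : ℝ, 0 ≤ a → 0 < b → 0 < c → 0 ≤ d → a * d ≤ b * c →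
    Good (a • G + b • F) (c • G + d • F) := by
  intro n
  induction n with
  | zero =>
    intro F G hdeg hF0 hG0 hgood a b c d ha hb hc hd hdet
    refine baseCase hF0 hG0 hgood ?_ ha hb hc hd hdet
    rintro w ⟨hwF, _⟩
    obtain ⟨k, hk⟩ := Polynomial.natDegree_eq_zero.1 (Nat.le_zero.1 hdeg)
    rw [← hk] at hwF hF0
    have : k = 0 := by simpa [Polynomial.IsRoot] using hwF
    rw [this] at hF0
    simp at hF0
  | succ n ih =>
    intro F G hdeg hF0 hG0 hgood a b c d ha hb hc hd hdet
    by_cases hcop : ∀ w : ℝ, ¬(F.IsRoot w ∧ G.IsRoot w)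
    · exact baseCase hF0 hG0 hgood hcop ha hb hc hd hdet
    · push_neg at hcop
      obtain ⟨w, hwF, hwG⟩ := hcop
      obtain ⟨F₁, hFfac, hF₁0, hFroots, hFdeg, hFlc, hFrr'⟩ := factor_out hF0 hwF
      obtain ⟨G₁, hGfac, hG₁0, hGroots, hGdeg, hGlc, hGrr'⟩ := factor_out hG0 hwG
      obtain ⟨hFrr, hGrr, hlF, hlG, δ, hδ, hdegFG, hcnt⟩ := hgood
      have hgood₁ : Good F₁ G₁ := by
        refine ⟨hFrr' hFrr, hGrr' hGrr, hFlc ▸ hlF, hGlc ▸ hlG, δ, hδ, by omega, fun x => ?_⟩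
        have e1 := cnt_factor hFroots x
        have e2 := cnt_factor hGroots x
        have e3 := hcnt x
        by_cases hwx : w ≤ x <;> simp only [hwx, if_true, if_false] at e1 e2 <;> omega
      have ihres := ih F₁ G₁ (by omega) hF₁0 hG₁0 hgood₁ a b c d ha hb hc hd hdet
      obtain ⟨hP₁rr, hQ₁rr, hP₁lc, hQ₁lc, δ', hδ', hdeg', hcnt'⟩ := ihres
      have hP₁0 : (a • G₁ + b • F₁) ≠ 0 := Polynomial.leadingCoeff_ne_zero.1 (ne_of_gt hP₁lc)
      have hQ₁0 : (c • G₁ + d • F₁) ≠ 0 := Polynomial.leadingCoeff_ne_zero.1 (ne_of_gt hQ₁lc)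
      have hPfac : a • G + b • F = (X - C w) * (a • G₁ + b • F₁) := by
        rw [hFfac, hGfac, mul_add, mul_smul_comm, mul_smul_comm]
      have hQfac : c • G + d • F = (X - C w) * (c • G₁ + d • F₁) := by
        rw [hFfac, hGfac, mul_add, mul_smul_comm, mul_smul_comm]
      have hXw : (X - C w : Polynomial ℝ) ≠ 0 := Polynomial.X_sub_C_ne_zero w
      have hP0 : a • G + b • F ≠ 0 := by rw [hPfac]; exact mul_ne_zero hXw hP₁0
      have hQ0 : c • G + d • F ≠ 0 := by rw [hQfac]; exact mul_ne_zero hXw hQ₁0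
      have hProots : (a • G + b • F).roots = w ::ₘ (a • G₁ + b • F₁).roots := by
        rw [hPfac, Polynomial.roots_mul (hPfac ▸ hP0), Polynomial.roots_X_sub_C]
        rfl
      have hQroots : (c • G + d • F).roots = w ::ₘ (c • G₁ + d • F₁).roots := by
        rw [hQfac, Polynomial.roots_mul (hQfac ▸ hQ0), Polynomial.roots_X_sub_C]
        rfl
      have hPdeg : (a • G + b • F).natDegree = (a • G₁ + b • F₁).natDegree + 1 := by
        rw [hPfac, Polynomial.natDegree_mul hXw hP₁0, Polynomial.natDegree_X_sub_C]
        omega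
      have hQdeg : (c • G + d • F).natDegree = (c • G₁ + d • F₁).natDegree + 1 := by
        rw [hQfac, Polynomial.natDegree_mul hXw hQ₁0, Polynomial.natDegree_X_sub_C]
        omega
      have hPlc : (a • G + b • F).leadingCoeff = (a • G₁ + b • F₁).leadingCoeff := by
        rw [hPfac, Polynomial.leadingCoeff_mul, Polynomial.leadingCoeff_X_sub_C, one_mul]
      have hQlc : (c • G + d • F).leadingCoeff = (c • G₁ + d • F₁).leadingCoeff := by
        rw [hQfac, Polynomial.leadingCoeff_mul, Polynomial.leadingCoeff_X_sub_C, one_mul]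
      have hPrr : RealRooted (a • G + b • F) := by
        unfold RealRooted at hP₁rr ⊢
        rw [hProots, hPdeg, Multiset.card_cons]
        omega
      have hQrr : RealRooted (c • G + d • F) := by
        unfold RealRooted at hQ₁rr ⊢
        rw [hQroots, hQdeg, Multiset.card_cons]
        omega
      refine ⟨hPrr, hQrr, hPlc ▸ hP₁lc, hQlc ▸ hQ₁lc, δ', hδ', by omega, fun x => ?_⟩
      have e1 := cnt_factor hProots x
      have e2 := cnt_factor hQroots x
      have e3 := hcnt' x
      by_cases hwx : w ≤ x <;> simp only [hwx, if_true, if_false] at e1 e2 <;> omega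

/-- if `a, b, c, d ≥ 0` with `ad ≤ bc` and `g ≼ f` for real-rooted
polynomials `f, g` with nonnegative coefficients, then
`a·x·g + b·f ≼ c·x·g + d·f` provided both are nonzero. -/
theorem stmt6 (a b c d : ℝ) (ha : 0 ≤ a) (hb : 0 ≤ b) (hc : 0 ≤ c) (hd : 0 ≤ d)
    (hdet : a * d ≤ b * c) (f g : Polynomial ℝ)
    (hfrr : RealRooted f) (hgrr : RealRooted g)
    (hfnn : NonnegCoeffs f) (hgnn : NonnegCoeffs g)
    (hint : Interlaces g f)
    (h1 : a • (X * g) + b • f ≠ 0) (h2 : c • (X * g) + d • f ≠ 0) :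
    Interlaces (a • (X * g) + b • f) (c • (X * g) + d • f) := by
  by_cases hg0 : g = 0
  · subst hg0
    simp only [mul_zero, smul_zero, zero_add] at h1 h2 ⊢
    have hf0 : f ≠ 0 := by rintro rfl; simp at h1
    have hb' : 0 < b := lt_of_le_of_ne hb (by rintro rfl; simp at h1)
    have hd' : 0 < d := lt_of_le_of_ne hd (by rintro rfl; simp at h2)
    exact interlaces_smul_self hf0 hfrr (lc_pos_of_nonneg hf0 hfnn) hb' hd'
  · have hXg0 : X * g ≠ 0 := mul_ne_zero Polynomial.X_ne_zero hg0
    have hXgroots : (X * g).roots = 0 ::ₘ g.roots := by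
      rw [Polynomial.roots_mul hXg0, Polynomial.roots_X]
      rfl
    have hXgdeg : (X * g).natDegree = g.natDegree + 1 := by
      rw [Polynomial.natDegree_mul Polynomial.X_ne_zero hg0, Polynomial.natDegree_X]
      omega
    have hXglc : (X * g).leadingCoeff = g.leadingCoeff := by
      rw [Polynomial.leadingCoeff_mul, Polynomial.leadingCoeff_X, one_mul]
    have hXgrr : RealRooted (X * g) := by
      unfold RealRooted at hgrr ⊢
      rw [hXgroots, hXgdeg, Multiset.card_cons]
      omega
    have hlcg := lc_pos_of_nonneg hg0 hgnn
    have hXglcpos : 0 < (X * g).leadingCoeff := by rw [hXglc]; exact hlcg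
    by_cases hf0 : f = 0
    · subst hf0
      simp only [smul_zero, add_zero] at h1 h2 ⊢
      have ha' : 0 < a := lt_of_le_of_ne ha (by rintro rfl; simp at h1)
      have hc' : 0 < c := lt_of_le_of_ne hc (by rintro rfl; simp at h2)
      exact interlaces_smul_self hXg0 hXgrr hXglcpos ha' hc'
    · have hlcf := lc_pos_of_nonneg hf0 hfnn
      have hGgf : Good g f := (interlaces_iff_good hg0 hf0).1 hint
      obtain ⟨_, _, _, _, δ₀, hδ₀, hdeg₀, hcnt₀⟩ := hGgf
      have hcntXg : ∀ x : ℝ, cnt (X * g) x = cnt g x + (if (0:ℝ) ≤ x then 1 else 0) :=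
        cnt_factor hXgroots
      have hcf : ∀ x : ℝ, 0 ≤ x → cnt f x = f.natDegree := fun x hx =>
        cnt_all hfrr (fun r hr => le_trans (roots_nonpos hfnn hf0 r hr) hx)
      have hcg : ∀ x : ℝ, 0 ≤ x → cnt g x = g.natDegree := fun x hx =>
        cnt_all hgrr (fun r hr => le_trans (roots_nonpos hgnn hg0 r hr) hx)
      have hGood : Good f (X * g) := by
        refine ⟨hfrr, hXgrr, hlcf, hXglcpos, 1 - δ₀, by omega, by omega, fun x => ?_⟩
        have e1 := (hcnt₀ x).1
        have e2 := (hcnt₀ x).2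
        rw [hcntXg x]
        by_cases hx : (0:ℝ) ≤ x
        · have e3 := hcf x hx
          have e4 := hcg x hx
          simp only [hx, if_true]
          omega
        · simp only [hx, if_false]
          omega
      by_cases hbz : b = 0
      · have ha' : 0 < a := lt_of_le_of_ne ha (by rintro rfl; rw [hbz] at h1; simp at h1)
        have hd0 : d = 0 := by
          have h' : a * d ≤ 0 := by rw [hbz] at hdet; linarith
          nlinarith
        rw [hbz] at h1 ⊢
        rw [hd0] at h2 ⊢
        simp only [zero_smul, add_zero] at h1 h2 ⊢
        have hc' : 0 < c := lt_of_le_of_ne hc (by rintro rfl; simp at h2)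
        exact interlaces_smul_self hXg0 hXgrr hXglcpos ha' hc'
      · by_cases hcz : c = 0
        · have hd' : 0 < d := lt_of_le_of_ne hd (by rintro rfl; rw [hcz] at h2; simp at h2)
          have ha0 : a = 0 := by
            have h' : a * d ≤ 0 := by rw [hcz] at hdet; linarith
            nlinarith
          rw [ha0] at h1 ⊢
          rw [hcz] at h2 ⊢
          simp only [zero_smul, zero_add] at h1 h2 ⊢
          have hb' : 0 < b := lt_of_le_of_ne hb (Ne.symm hbz)
          exact interlaces_smul_self hf0 hfrr hlcf hb' hd'
        · have hb' : 0 < b := lt_of_le_of_ne hb (Ne.symm hbz)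
          have hc' : 0 < c := lt_of_le_of_ne hc (Ne.symm hcz)
          have hmain := mainAux f.natDegree f (X * g) (le_refl _) hf0 hXg0 hGood
            a b c d ha hb' hc' hd hdet
          have hP0 : a • (X * g) + b • f ≠ 0 :=
            Polynomial.leadingCoeff_ne_zero.1 (ne_of_gt hmain.2.2.1)
          have hQ0 : c • (X * g) + d • f ≠ 0 :=
            Polynomial.leadingCoeff_ne_zero.1 (ne_of_gt hmain.2.2.2.1)
          exact (interlaces_iff_good hP0 hQ0).2 hmain
end

section
/- For n ≥ 1, the polynomial E_2((x)^n) arising from r = 2 is: x^{n/2} if n is even and 0 otherwise; more interestingly, for r = 3 and any n ≥ 1, the polynomial E_3((x + x^2)^n) = Σ_{k} C(n, 3k - n)·x^k has only real roots. -/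
open Polynomial Finset Real Complex

noncomputable def om : ℂ := ⟨-1/2, Real.sqrt 3 / 2⟩
noncomputable def cc (n k : ℕ) : ℝ := if n ≤ 3 * k then ((n.choose (3 * k - n) : ℝ)) else 0
noncomputable def pp (n : ℕ) : Polynomial ℝ := ∑ k ∈ range (n+1), C (cc n k) * X^k
noncomputable def qq (n : ℕ) : Polynomial ℝ := ∑ k ∈ range (n+1), C (cc n ((n+2)/3 + k)) * X^k
noncomputable def tpsi (ψ : ℝ) : ℝ := Real.sin (ψ-π/3)/Real.sin (ψ+π/3)
def Jf (n i : ℕ) : ℕ := min (max (3*((n+2)/3+i)) (n+1)) (2*n-1)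



lemma sq3 : (Real.sqrt 3: ℝ) * Real.sqrt 3 = 3 :=
  Real.mul_self_sqrt (by norm_num)

lemma om_sq : om^2 = ⟨-1/2, -(Real.sqrt 3 / 2)⟩ := by
  apply Complex.ext <;> simp [om, pow_two, Complex.mul_re, Complex.mul_im] <;> nlinarith [sq3]

lemma om_cube : om^3 = 1 := by
  have : om^3 = om^2 * om := by ring
  rw [this, om_sq]
  apply Complex.ext <;> simp [om, Complex.mul_re, Complex.mul_im] <;> nlinarith [sq3]

lemma om_sum : 1 + om + om^2 = 0 := by
  rw [om_sq]
  apply Complex.ext <;> simp [om]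
  norm_num

lemma om_pow_filter (s : ℕ) : 1 + om^s + om^(2*s) = if 3 ∣ s then 3 else 0 := by
  have h1 : om^s = om^(s % 3) := by
    conv_lhs => rw [← Nat.mod_add_div s 3, pow_add, pow_mul, om_cube, one_pow, mul_one]
  have h2 : om^(2*s) = (om^(s % 3))^2 := by
    rw [mul_comm 2 s, pow_mul, h1, ← pow_mul, mul_comm, pow_mul]
  rw [h1, h2]
  have hlt : s % 3 = 0 ∨ s % 3 = 1 ∨ s % 3 = 2 := by omega
  rcases hlt with h | h | h
  · rw [h]
    have : 3 ∣ s := Nat.dvd_of_mod_eq_zero h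
    simp [this]
    norm_num
  · rw [h, if_neg (by omega : ¬ 3 ∣ s)]
    have := om_sum
    rw [pow_one]
    linear_combination this
  · rw [h, if_neg (by omega : ¬ 3 ∣ s)]
    have h4 : (om^2)^2 = om := by
      have : (om^2)^2 = om^3 * om := by ring
      rw [this, om_cube, one_mul]
    rw [h4]
    linear_combination om_sum



lemma cc_eq (n k : ℕ) : cc n k = if n ≤ 3*k ∧ 3*k ≤ 2*n then (n.choose (3*k-n) : ℝ) else 0 := by
  unfold cc
  by_cases h1 : n ≤ 3*k
  · by_cases h2 : 3*k ≤ 2*n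
    · rw [if_pos h1, if_pos ⟨h1, h2⟩]
    · rw [if_pos h1, if_neg (fun h => h2 h.2), Nat.choose_eq_zero_of_lt (by omega)]
      norm_num
  · rw [if_neg h1, if_neg (fun h => h1 h.1)]

lemma expand_term (n : ℕ) (x w : ℂ) :
    (w*x + w^2*x^2)^n = ∑ j ∈ range (n+1), (n.choose j : ℂ) * w^(n+j) * x^(n+j) := by
  have h1 : w*x + w^2*x^2 = w*x * (w*x + 1) := by ring
  rw [h1, mul_pow, add_pow]
  rw [Finset.mul_sum]
  apply Finset.sum_congr rfl
  intro j hj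
  rw [one_pow, mul_pow, mul_pow]
  ring_nf

lemma filter_id (n : ℕ) (x : ℂ) :
    3 * ∑ k ∈ range (n+1), (cc n k : ℂ) * x^(3*k)
    = (x + x^2)^n + (om*x + om^2*x^2)^n + (om^2*x + om*x^2)^n := by
  have e1 : (x + x^2)^n = ∑ j ∈ range (n+1), (n.choose j : ℂ) * (1:ℂ)^(n+j) * x^(n+j) := by
    have := expand_term n x 1
    simpa using this
  have e2 := expand_term n x om
  have e3 : (om^2*x + om*x^2)^n
      = ∑ j ∈ range (n+1), (n.choose j : ℂ) * (om^2)^(n+j) * x^(n+j) := by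
    have h4 : (om^2)^2 = om := by
      have : (om^2)^2 = om^3 * om := by ring
      rw [this, om_cube, one_mul]
    have := expand_term n x (om^2)
    rw [h4] at this
    exact this
  rw [e1, e2, e3, ← Finset.sum_add_distrib, ← Finset.sum_add_distrib]
  have rhs_eq : ∀ j ∈ range (n+1),
      (n.choose j : ℂ) * (1:ℂ)^(n+j) * x^(n+j) + (n.choose j : ℂ) * om^(n+j) * x^(n+j)
        + (n.choose j : ℂ) * (om^2)^(n+j) * x^(n+j)
      = (if 3 ∣ (n+j) then (3:ℂ) else 0) * ((n.choose j : ℂ) * x^(n+j)) := by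
    intro j hj
    rw [← om_pow_filter (n+j)]
    rw [← pow_mul]
    ring
  rw [Finset.sum_congr rfl rhs_eq, Finset.mul_sum]
  simp only [ite_mul, zero_mul]
  rw [← Finset.sum_filter]
  have lhs_eq : ∀ k ∈ range (n+1), (3:ℂ) * ((cc n k : ℂ) * x^(3*k))
      = if n ≤ 3*k ∧ 3*k ≤ 2*n then (3:ℂ) * (n.choose (3*k-n) : ℂ) * x^(3*k) else 0 := by
    intro k hk
    rw [cc_eq]
    split_ifs with h
    · push_cast; ring
    · push_cast; ring
  rw [Finset.sum_congr rfl lhs_eq, ← Finset.sum_filter]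
  apply Finset.sum_nbij' (i := fun k => 3*k - n) (j := fun j => (n+j)/3)
  · intro k hk
    simp only [Finset.mem_filter, Finset.mem_range] at hk ⊢
    refine ⟨by omega, by omega⟩
  · intro j hj
    simp only [Finset.mem_filter, Finset.mem_range] at hj ⊢
    obtain ⟨hj1, hj2⟩ := hj
    obtain ⟨c, hc⟩ := hj2
    omega
  · intro k hk
    simp only [Finset.mem_filter, Finset.mem_range] at hk
    omega
  · intro j hj
    simp only [Finset.mem_filter, Finset.mem_range] at hj
    obtain ⟨hj1, hj2⟩ := hj
    obtain ⟨c, hc⟩ := hj2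
    omega
  · intro k hk
    simp only [Finset.mem_filter, Finset.mem_range] at hk
    have h1 : n + (3*k - n) = 3*k := by omega
    rw [h1]
    ring


lemma coeff_sum_poly (a : ℕ → ℝ) (N j : ℕ) :
    (∑ k ∈ range (N+1), C (a k) * X^k).coeff j = if j ≤ N then a j else 0 := by
  rw [finset_sum_coeff]
  simp only [coeff_C_mul, coeff_X_pow]
  by_cases h : j ≤ N
  · rw [if_pos h, Finset.sum_eq_single j]
    · simp
    · intro b _ hb
      rw [if_neg (Ne.symm hb)]
      ring
    · intro hj
      exact absurd (Finset.mem_range.mpr (by omega)) hj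
  · rw [if_neg h]
    apply Finset.sum_eq_zero
    intro b hb
    simp only [Finset.mem_range] at hb
    rw [if_neg (by omega)]
    ring

lemma cc_zero_low (n k : ℕ) (h : k < (n+2)/3) : cc n k = 0 := by
  rw [cc]
  rw [if_neg]
  omega

lemma cc_zero_high (n k : ℕ) (h : 2*n/3 < k) : cc n k = 0 := by
  rw [cc_eq, if_neg]
  omega

lemma cc_d_ne (n : ℕ) (hn : 2 ≤ n) : cc n (2*n/3) ≠ 0 := by
  rw [cc_eq, if_pos (by omega)]
  have : 0 < n.choose (3*(2*n/3)-n) := Nat.choose_pos (by omega)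
  positivity

lemma pp_coeff (n j : ℕ) : (pp n).coeff j = if j ≤ n then cc n j else 0 := coeff_sum_poly _ n j

lemma qq_coeff (n j : ℕ) : (qq n).coeff j = if j ≤ n then cc n ((n+2)/3 + j) else 0 :=
  coeff_sum_poly _ n j

lemma pp_coeff' (n j : ℕ) : (pp n).coeff j = cc n j := by
  rw [pp_coeff]
  split_ifs with h
  · rfl
  · rw [cc_zero_high n j (by omega)]

lemma pp_factor (n : ℕ) (hn : 2 ≤ n) : pp n = X^((n+2)/3) * qq n := by
  ext j
  rw [pp_coeff', coeff_X_pow_mul']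
  by_cases hj : (n+2)/3 ≤ j
  · rw [if_pos hj, qq_coeff]
    by_cases h2 : j - (n+2)/3 ≤ n
    · rw [if_pos h2]
      congr 1
      omega
    · rw [if_neg h2, cc_zero_high n j (by omega)]
  · rw [if_neg hj, cc_zero_low n j (by omega)]

lemma qq_natDegree (n : ℕ) (hn : 2 ≤ n) : (qq n).natDegree = 2*n/3 - (n+2)/3 := by
  apply le_antisymm
  · rw [natDegree_le_iff_coeff_eq_zero]
    intro j hj
    rw [qq_coeff]
    split_ifs with h
    · exact cc_zero_high n _ (by omega)
    · rfl
  · apply le_natDegree_of_ne_zero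
    rw [qq_coeff, if_pos (by omega)]
    have : (n+2)/3 + (2*n/3 - (n+2)/3) = 2*n/3 := by omega
    rw [this]
    exact cc_d_ne n hn

lemma qq_coeff_zero (n : ℕ) (hn : 2 ≤ n) : (qq n).coeff 0 ≠ 0 := by
  rw [qq_coeff, if_pos (by omega)]
  rw [cc_eq, if_pos (by omega)]
  have : 0 < n.choose (3*((n+2)/3+0)-n) := Nat.choose_pos (by omega)
  positivity

lemma pp_natDegree (n : ℕ) (hn : 2 ≤ n) : (pp n).natDegree = 2*n/3 := by
  rw [pp_factor n hn, natDegree_mul (pow_ne_zero _ X_ne_zero) (fun h => qq_coeff_zero n hn (by rw [h]; simp)),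
    natDegree_X_pow, qq_natDegree n hn]
  omega

lemma pp_eval (n : ℕ) (y : ℝ) : (pp n).eval y = ∑ k ∈ range (n+1), cc n k * y^k := by
  rw [pp, eval_finset_sum]
  simp



lemma hA' (ψ s t : ℝ)
    (hsub : s - s*t = Real.sqrt 3 * Real.cos ψ)
    (hadd : s + s*t = Real.sin ψ) :
    (om^2*(t:ℂ) - om) * (2*(s:ℂ)) = ((Real.sqrt 3 : ℝ):ℂ) * Complex.exp ((-ψ:ℝ)*Complex.I) := by
  rw [om_sq, Complex.exp_mul_I]
  simp only [Complex.ofReal_neg, neg_mul, Complex.cos_neg, Complex.sin_neg]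
  apply Complex.ext
  · simp [om, Complex.mul_re, Complex.mul_im, Complex.cos_ofReal_re, Complex.sin_ofReal_re,
      Complex.cos_ofReal_im, Complex.sin_ofReal_im]
    linear_combination hsub
  · simp [om, Complex.mul_re, Complex.mul_im, Complex.cos_ofReal_re, Complex.sin_ofReal_re,
      Complex.cos_ofReal_im, Complex.sin_ofReal_im]
    linear_combination (-Real.sqrt 3) * hadd
lemma hB' (ψ s t : ℝ)
    (hsub : s - s*t = Real.sqrt 3 * Real.cos ψ)
    (hadd : s + s*t = Real.sin ψ) :
    (om*(t:ℂ) - om^2) * (2*(s:ℂ)) = ((Real.sqrt 3 : ℝ):ℂ) * Complex.exp ((ψ:ℝ)*Complex.I) := by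
  rw [om_sq, Complex.exp_mul_I]
  apply Complex.ext
  · simp [om, Complex.mul_re, Complex.mul_im, Complex.cos_ofReal_re, Complex.sin_ofReal_re,
      Complex.cos_ofReal_im, Complex.sin_ofReal_im]
    linear_combination hsub
  · simp [om, Complex.mul_re, Complex.mul_im, Complex.cos_ofReal_re, Complex.sin_ofReal_re,
      Complex.cos_ofReal_im, Complex.sin_ofReal_im]
    linear_combination Real.sqrt 3 * hadd


lemma trig_sub (ψ : ℝ) : Real.sin (ψ+π/3) - Real.sin (ψ-π/3) = Real.sqrt 3 * Real.cos ψ := by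
  rw [Real.sin_add, Real.sin_sub, Real.sin_pi_div_three, Real.cos_pi_div_three]; ring

lemma trig_add (ψ : ℝ) : Real.sin (ψ+π/3) + Real.sin (ψ-π/3) = Real.sin ψ := by
  rw [Real.sin_add, Real.sin_sub, Real.cos_pi_div_three]; ring

lemma key_eval (n : ℕ) (ψ : ℝ) (hs : Real.sin (ψ+π/3) ≠ 0) :
    3 * ∑ k ∈ Finset.range (n+1),
        cc n k * (-(Real.sin (ψ-π/3)/Real.sin (ψ+π/3))^3)^k
    = (Real.sqrt 3 * (Real.sin (ψ-π/3)/Real.sin (ψ+π/3)) / (2*Real.sin (ψ+π/3)))^n *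
      ((-(2*Real.cos ψ))^n + 2*Real.cos (n*ψ)) := by
  set s := Real.sin (ψ+π/3) with hsdef
  set t := Real.sin (ψ-π/3)/s with htdef
  set r := Real.sqrt 3 * t / (2*s) with hrdef
  have hst : s * t = Real.sin (ψ-π/3) := by rw [htdef]; field_simp
  have hsub : s - s*t = Real.sqrt 3 * Real.cos ψ := by rw [hst]; exact trig_sub ψ
  have hadd : s + s*t = Real.sin ψ := by rw [hst]; exact trig_add ψ
  have hC : t^2 - t = -(2*Real.cos ψ) * r := by
    rw [hrdef, mul_div_assoc', eq_div_iff (mul_ne_zero two_ne_zero hs)]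
    linear_combination (-2*t) * hsub
  have hs2 : (2*(s:ℂ)) ≠ 0 := by
    simp only [ne_eq, mul_eq_zero]
    push_neg
    exact ⟨two_ne_zero, fun h => hs (by exact_mod_cast h)⟩
  have hAq : om^2*(t:ℂ) - om = ((Real.sqrt 3 : ℝ):ℂ) * Complex.exp ((-ψ:ℝ)*Complex.I) / (2*(s:ℂ)) := by
    rw [eq_div_iff hs2]; exact hA' ψ s t hsub hadd
  have hBq : om*(t:ℂ) - om^2 = ((Real.sqrt 3 : ℝ):ℂ) * Complex.exp ((ψ:ℝ)*Complex.I) / (2*(s:ℂ)) := by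
    rw [eq_div_iff hs2]; exact hB' ψ s t hsub hadd
  have hr : (r:ℂ) = (t:ℂ) * (((Real.sqrt 3 : ℝ):ℂ) / (2*(s:ℂ))) := by
    rw [hrdef]; push_cast; field_simp
  have hz2 : om*(-(t:ℂ)) + om^2*(-(t:ℂ))^2 = (r:ℂ) * Complex.exp ((-ψ:ℝ)*Complex.I) := by
    have e : om*(-(t:ℂ)) + om^2*(-(t:ℂ))^2 = (t:ℂ) * (om^2*(t:ℂ) - om) := by ring
    rw [e, hAq, hr]; ring
  have hz3 : om^2*(-(t:ℂ)) + om*(-(t:ℂ))^2 = (r:ℂ) * Complex.exp ((ψ:ℝ)*Complex.I) := by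
    have e : om^2*(-(t:ℂ)) + om*(-(t:ℂ))^2 = (t:ℂ) * (om*(t:ℂ) - om^2) := by ring
    rw [e, hBq, hr]; ring
  have hT1 : (-(t:ℂ)) + (-(t:ℂ))^2 = ((-(2*Real.cos ψ) * r : ℝ):ℂ) := by
    push_cast
    have : (t:ℂ)^2 - (t:ℂ) = ((t^2 - t : ℝ) : ℂ) := by push_cast; ring
    rw [show (-(t:ℂ)) + (-(t:ℂ))^2 = (t:ℂ)^2 - (t:ℂ) by ring, this, hC]
    push_cast; ring
  have hexp : Complex.exp ((-ψ:ℝ)*Complex.I)^n + Complex.exp ((ψ:ℝ)*Complex.I)^n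
      = 2 * ((Real.cos (n*ψ) : ℝ):ℂ) := by
    have e1 : Complex.exp (((-ψ:ℝ):ℂ)*Complex.I)^n = Complex.exp (((-((n:ℝ)*ψ):ℝ):ℂ)*Complex.I) := by
      rw [← Complex.exp_nat_mul]; congr 1; push_cast; ring
    have e2 : Complex.exp (((ψ:ℝ):ℂ)*Complex.I)^n = Complex.exp (((((n:ℝ)*ψ):ℝ):ℂ)*Complex.I) := by
      rw [← Complex.exp_nat_mul]; congr 1; push_cast; ring
    rw [e1, e2, Complex.exp_mul_I, Complex.exp_mul_I]
    rw [show ((-((n:ℝ)*ψ):ℝ):ℂ) = -((((n:ℝ)*ψ:ℝ)):ℂ) by push_cast; ring, Complex.cos_neg,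
      Complex.sin_neg, ← Complex.ofReal_cos]
    ring
  have main := filter_id n (-(t:ℂ))
  rw [hz2, hz3, hT1] at main
  have hRHS : ((-(2*Real.cos ψ) * r : ℝ):ℂ)^n + ((r:ℂ) * Complex.exp ((-ψ:ℝ)*Complex.I))^n
      + ((r:ℂ) * Complex.exp ((ψ:ℝ)*Complex.I))^n
      = ((r^n * ((-(2*Real.cos ψ))^n + 2*Real.cos (n*ψ)) : ℝ):ℂ) := by
    rw [mul_pow, mul_pow]
    push_cast
    push_cast at hexp
    linear_combination ((r:ℂ)^n) * hexp
  rw [hRHS] at main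
  have hL : ∀ k, (-(t:ℂ))^(3*k) = ((-t^3 : ℝ):ℂ)^k := by
    intro k
    rw [pow_mul]
    congr 1
    push_cast
    ring
  have hLHS : (3 : ℂ) * ∑ k ∈ range (n+1), (cc n k : ℂ) * (-(t:ℂ))^(3*k)
      = ((3 * ∑ k ∈ Finset.range (n+1), cc n k * (-t^3)^k : ℝ):ℂ) := by
    push_cast
    apply congrArg
    apply Finset.sum_congr rfl
    intro k _
    rw [hL k]
    push_cast
    ring
  rw [hLHS] at main
  exact_mod_cast main



lemma J_bounds (n i : ℕ) (hn : 2 ≤ n) : n < Jf n i ∧ Jf n i < 2*n := by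
  unfold Jf; omega

lemma J_mono (n i j : ℕ) (hn : 2 ≤ n) (hij : i < j) (hj : j ≤ 2*n/3 - (n+2)/3) :
    Jf n i < Jf n j := by
  unfold Jf; omega

lemma J_cases (n i : ℕ) (hn : 2 ≤ n) (hi : i ≤ 2*n/3 - (n+2)/3) :
    Jf n i = 3*((n+2)/3+i) ∨
    (Jf n i = 3*((n+2)/3) + 1 ∧ n = 3*((n+2)/3) ∧ i = 0) ∨
    (Jf n i = 6*((n+2)/3) - 1 ∧ n = 3*((n+2)/3) ∧ (n+2)/3 + i = 2*((n+2)/3) ∧ 1 ≤ (n+2)/3) := by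
  unfold Jf; omega

lemma cos_triple (j : ℕ) : Real.cos ((3*j:ℕ)*π/3) = (-1)^j := by
  have h : ((3*j:ℕ):ℝ)*π/3 = j*π - 0 := by push_cast; ring
  rw [h, Real.cos_nat_mul_pi_sub]
  simp

lemma cos_tripleB (j : ℕ) : Real.cos ((3*j+1:ℕ)*π/3) = (-1)^j * (1/2) := by
  have h : ((3*j+1:ℕ):ℝ)*π/3 = (j+1)*π - (2*π/3) := by push_cast; ring
  rw [h]
  have := Real.cos_nat_mul_pi_sub (2*π/3) (j+1)
  push_cast at this ⊢
  rw [this]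
  have h2 : Real.cos (2*π/3) = -(1/2) := by
    rw [show (2*π/3) = π - π/3 by ring, Real.cos_pi_sub, Real.cos_pi_div_three]
  rw [h2]
  ring

lemma cos_tripleC (a : ℕ) (ha : 1 ≤ a) : Real.cos ((6*a-1:ℕ)*π/3) = 1/2 := by
  have h : ((6*a-1:ℕ):ℝ)*π/3 = (2*a:ℕ)*π - π/3 := by
    have : ((6*a-1:ℕ):ℝ) = 6*(a:ℝ) - 1 := by
      have : (1:ℕ) ≤ 6*a := by omega
      push_cast [Nat.cast_sub this]
      ring
    rw [this]
    push_cast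
    ring
  rw [h, Real.cos_nat_mul_pi_sub, Real.cos_pi_div_three]
  rw [pow_mul]
  norm_num


lemma sin_plus_pos (ψ : ℝ) (h1 : π/3 < ψ) (h2 : ψ < 2*π/3) : 0 < Real.sin (ψ+π/3) := by
  apply Real.sin_pos_of_pos_of_lt_pi <;> [linarith [pi_pos]; linarith [pi_pos]]

lemma sin_minus_pos (ψ : ℝ) (h1 : π/3 < ψ) (h2 : ψ < 2*π/3) : 0 < Real.sin (ψ-π/3) := by
  apply Real.sin_pos_of_pos_of_lt_pi <;> [linarith [pi_pos]; linarith [pi_pos]]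

lemma tpsi_pos (ψ : ℝ) (h1 : π/3 < ψ) (h2 : ψ < 2*π/3) : 0 < tpsi ψ :=
  div_pos (sin_minus_pos ψ h1 h2) (sin_plus_pos ψ h1 h2)

lemma abs_two_cos_lt (ψ : ℝ) (h1 : π/3 < ψ) (h2 : ψ < 2*π/3) : |2*Real.cos ψ| < 1 := by
  have hc1 : Real.cos ψ < Real.cos (π/3) := by
    apply Real.strictAntiOn_cos ⟨by positivity, by linarith [pi_pos]⟩
      ⟨by linarith [pi_pos], by linarith [pi_pos]⟩ h1
  have hc2 : Real.cos (2*π/3) < Real.cos ψ := by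
    apply Real.strictAntiOn_cos ⟨by linarith [pi_pos], by linarith [pi_pos]⟩
      ⟨by linarith [pi_pos], by linarith [pi_pos]⟩ h2
  rw [Real.cos_pi_div_three] at hc1
  rw [show (2*π/3) = π - π/3 by ring, Real.cos_pi_sub, Real.cos_pi_div_three] at hc2
  rw [abs_lt]
  constructor <;> linarith

lemma sign_lemma (n : ℕ) (hn : 2 ≤ n) (ψ : ℝ) (h1 : π/3 < ψ) (h2 : ψ < 2*π/3) (ε : ℝ)
    (hε : ε = 1 ∨ ε = -1) (hcos : 1/2 ≤ ε * Real.cos (n*ψ)) :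
    0 < ε * (pp n).eval (-(tpsi ψ)^3) := by
  have hs := sin_plus_pos ψ h1 h2
  have key := key_eval n ψ (ne_of_gt hs)
  rw [← pp_eval] at key
  have ht := tpsi_pos ψ h1 h2
  have hr : 0 < Real.sqrt 3 * (tpsi ψ) / (2*Real.sin (ψ+π/3)) := by
    have h3 : (0:ℝ) < Real.sqrt 3 := by positivity
    unfold tpsi at *
    positivity
  set r := Real.sqrt 3 * (Real.sin (ψ-π/3)/Real.sin (ψ+π/3)) / (2*Real.sin (ψ+π/3)) with hrdef
  have hrpos : 0 < r := hr
  have habs := abs_two_cos_lt ψ h1 h2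
  have habsn : |(-(2*Real.cos ψ))^n| < 1 := by
    rw [_root_.abs_pow, abs_neg]
    exact pow_lt_one₀ (abs_nonneg _) habs (by omega)
  have hsum : 0 < ε * ((-(2*Real.cos ψ))^n + 2*Real.cos (n*ψ)) := by
    have h1' : ε * (-(2*Real.cos ψ))^n ≥ -|(-(2*Real.cos ψ))^n| := by
      rcases hε with h | h <;> rw [h]
      · rw [one_mul]; exact neg_abs_le _
      · rw [neg_one_mul, ge_iff_le, neg_le_neg_iff]; exact le_abs_self _
    have h2' : ε * (2*Real.cos (n*ψ)) ≥ 1 := by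
      have : ε * (2*Real.cos (n*ψ)) = 2 * (ε * Real.cos (n*ψ)) := by ring
      rw [this]; linarith
    calc (0:ℝ) < -|(-(2*Real.cos ψ))^n| + 1 := by linarith
    _ ≤ ε * (-(2*Real.cos ψ))^n + ε * (2*Real.cos (n*ψ)) := by linarith
    _ = ε * ((-(2*Real.cos ψ))^n + 2*Real.cos (n*ψ)) := by ring
  have h3 : 3 * (ε * (pp n).eval (-(tpsi ψ)^3)) = r^n * (ε * ((-(2*Real.cos ψ))^n + 2*Real.cos (n*ψ))) := by
    unfold tpsi
    linear_combination ε * key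
  nlinarith [pow_pos hrpos n]


lemma tpsi_mono (ψ1 ψ2 : ℝ) (h1 : π/3 < ψ1) (h2 : ψ2 < 2*π/3) (h12 : ψ1 < ψ2) :
    tpsi ψ1 < tpsi ψ2 := by
  have b1 : π/3 < ψ2 := lt_trans h1 h12
  have b2 : ψ1 < 2*π/3 := lt_trans h12 h2
  have s1 := sin_plus_pos ψ1 h1 b2
  have s2 := sin_plus_pos ψ2 b1 h2
  unfold tpsi
  rw [div_lt_div_iff₀ s1 s2]
  have key : Real.sin (ψ2-π/3) * Real.sin (ψ1+π/3) - Real.sin (ψ1-π/3) * Real.sin (ψ2+π/3)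
      = (Real.sqrt 3 / 2) * Real.sin (ψ2 - ψ1) := by
    rw [Real.sin_sub, Real.sin_add, Real.sin_sub, Real.sin_add, Real.sin_sub,
      Real.sin_pi_div_three, Real.cos_pi_div_three]
    ring
  have hpos : 0 < Real.sin (ψ2 - ψ1) := by
    apply Real.sin_pos_of_pos_of_lt_pi
    · linarith
    · linarith [pi_pos]
  nlinarith [Real.sqrt_pos.mpr (by norm_num : (0:ℝ) < 3)]



theorem pp_realRooted (n : ℕ) (hn : 2 ≤ n) : (pp n).roots.card = (pp n).natDegree := by
  set k0 := (n+2)/3 with hk0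
  set m := 2*n/3 - (n+2)/3 with hm
  have hnR : (0:ℝ) < (n:ℝ) := by positivity
  set ψ : ℕ → ℝ := fun i => (Jf n i) * π / (3*n) with hψ
  have hψb : ∀ i, π/3 < ψ i ∧ ψ i < 2*π/3 := by
    intro i
    obtain ⟨hJ1, hJ2⟩ := J_bounds n i hn
    have e1 : π/3 = (n:ℝ)*π/(3*n) := by field_simp
    have e2 : 2*π/3 = ((2*n:ℕ):ℝ)*π/(3*n) := by push_cast; field_simp
    have h1 : ((n:ℝ)) < ((Jf n i : ℕ):ℝ) := by exact_mod_cast hJ1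
    have h2 : ((Jf n i : ℕ):ℝ) < ((2*n:ℕ):ℝ) := by exact_mod_cast hJ2
    constructor
    · rw [hψ, e1]
      simp only
      gcongr
    · rw [hψ, e2]
      simp only
      gcongr
  set y : ℕ → ℝ := fun i => -(tpsi (ψ i))^3 with hy
  have hy_neg : ∀ i, y i < 0 := by
    intro i
    have := tpsi_pos (ψ i) (hψb i).1 (hψb i).2
    rw [hy]
    simp only
    have h3 : 0 < (tpsi (ψ i))^3 := pow_pos this 3
    linarith
  have hy_mono : ∀ i j, i < j → j ≤ m → y j < y i := by
    intro i j hij hj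
    have hJ := J_mono n i j hn hij (by omega)
    have hψm : ψ i < ψ j := by
      rw [hψ]
      simp only
      have hc : ((Jf n i : ℕ):ℝ) < ((Jf n j : ℕ):ℝ) := by exact_mod_cast hJ
      gcongr
    have ht := tpsi_mono (ψ i) (ψ j) (hψb i).1 (hψb j).2 hψm
    have hti := tpsi_pos (ψ i) (hψb i).1 (hψb i).2
    rw [hy]
    simp only
    have : (tpsi (ψ i))^3 < (tpsi (ψ j))^3 := by
      apply pow_lt_pow_left₀ ht (le_of_lt hti)
      norm_num
    linarith
  have hsign : ∀ i, i ≤ m → 0 < (-1:ℝ)^(k0+i) * (pp n).eval (y i) := by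
    intro i hi
    apply sign_lemma n hn (ψ i) (hψb i).1 (hψb i).2
    · rcases Nat.even_or_odd (k0+i) with he | ho
      · exact Or.inl he.neg_one_pow
      · exact Or.inr ho.neg_one_pow
    · have hnψ : (n:ℝ) * ψ i = ((Jf n i : ℕ):ℝ)*π/3 := by
        rw [hψ]
        field_simp
      rw [hnψ]
      rcases J_cases n i hn (by omega) with hA | ⟨hB, hB2, hB3⟩ | ⟨hC, hC2, hC3, hC4⟩
      · rw [hA, cos_triple (k0+i)]
        have : ((-1:ℝ))^(k0+i) * (-1)^(k0+i) = 1 := by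
          rw [← pow_add]
          exact Even.neg_one_pow ⟨k0+i, rfl⟩
        rw [this]
        norm_num
      · subst hB3
        rw [hB, cos_tripleB k0]
        have : ((-1:ℝ))^(k0+0) * ((-1)^k0 * (1/2)) = 1/2 := by
          rw [Nat.add_zero, ← mul_assoc, ← pow_add]
          rw [Even.neg_one_pow ⟨k0, rfl⟩]
          ring
        rw [this]
      · rw [hC, cos_tripleC k0 hC4]
        have : k0 + i = 2*k0 := hC3
        rw [this]
        rw [Even.neg_one_pow ⟨k0, by ring⟩]
        norm_num
  -- IVT roots
  have hIVT : ∀ i, i < m → ∃ x, y (i+1) < x ∧ x < y i ∧ (pp n).eval x = 0 := by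
    intro i hi
    have hylt : y (i+1) < y i := hy_mono i (i+1) (lt_add_one i) (by omega)
    have hcont : ContinuousOn (fun x => (pp n).eval x) (Set.Icc (y (i+1)) (y i)) :=
      ((pp n).continuous_aeval).continuousOn
    have s1 := hsign i (by omega)
    have s2 := hsign (i+1) (by omega)
    rw [show k0+(i+1) = (k0+i)+1 by ring] at s2
    rcases Nat.even_or_odd (k0+i) with he | ho
    · rw [he.neg_one_pow, one_mul] at s1
      rw [(Even.add_one he).neg_one_pow, neg_one_mul, neg_pos] at s2
      obtain ⟨x, hx, hx0⟩ := intermediate_value_Ioo (le_of_lt hylt) hcont ⟨s2, s1⟩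
      exact ⟨x, hx.1, hx.2, hx0⟩
    · rw [ho.neg_one_pow, neg_one_mul, neg_pos] at s1
      rw [(Odd.add_one ho).neg_one_pow, one_mul] at s2
      obtain ⟨x, hx, hx0⟩ := intermediate_value_Ioo' (le_of_lt hylt) hcont ⟨s1, s2⟩
      exact ⟨x, hx.1, hx.2, hx0⟩
  choose cfun hc1 hc2 hc3 using hIVT
  set c : ℕ → ℝ := fun i => if h : i < m then cfun i h else 0 with hcdef
  have hcprop : ∀ i (h : i < m), y (i+1) < c i ∧ c i < y i ∧ (pp n).eval (c i) = 0 := by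
    intro i h
    rw [hcdef]
    simp only [dif_pos h]
    exact ⟨hc1 i h, hc2 i h, hc3 i h⟩
  have hcneg : ∀ i, i < m → c i < 0 := by
    intro i h
    have := (hcprop i h).2.1
    have := hy_neg i
    linarith
  have hqne : qq n ≠ 0 := fun h => qq_coeff_zero n hn (by rw [h]; simp)
  have hq_root : ∀ i, i < m → (qq n).eval (c i) = 0 := by
    intro i h
    have hz := (hcprop i h).2.2
    rw [pp_factor n hn, eval_mul, eval_pow, eval_X] at hz
    rcases mul_eq_zero.mp hz with h' | h'
    · exact absurd h' (pow_ne_zero _ (ne_of_lt (hcneg i h)))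
    · exact h'
  have hc_anti : ∀ i j, i < j → j < m → c j < c i := by
    intro i j hij hj
    have h1 : c j < y j := (hcprop j hj).2.1
    have h2 : y (i+1) < c i := (hcprop i (by omega)).1
    have h3 : y j ≤ y (i+1) := by
      rcases eq_or_lt_of_le (by omega : i+1 ≤ j) with h | h
      · rw [← h]
      · exact le_of_lt (hy_mono (i+1) j h (by omega))
    linarith
  have hm_le : m ≤ (qq n).roots.card := by
    have hinj : Set.InjOn c (Finset.range m) := by
      intro i hi j hj hij
      simp only [Finset.coe_range, Set.mem_Iio] at hi hj
      rcases lt_trichotomy i j with h | h | h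
      · exact absurd hij (ne_of_gt (hc_anti i j h hj))
      · exact h
      · exact absurd hij (ne_of_lt (hc_anti j i h hi))
    have hsub : (Finset.range m).image c ⊆ (qq n).roots.toFinset := by
      intro x hx
      simp only [Finset.mem_image, Finset.mem_range] at hx
      obtain ⟨i, hi, rfl⟩ := hx
      rw [Multiset.mem_toFinset, Polynomial.mem_roots hqne]
      exact hq_root i hi
    calc m = ((Finset.range m).image c).card := by
            rw [Finset.card_image_of_injOn hinj, Finset.card_range]
    _ ≤ (qq n).roots.toFinset.card := Finset.card_le_card hsub
    _ ≤ (qq n).roots.card := Multiset.toFinset_card_le _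
  have hfac := pp_factor n hn
  have hXne : (X:Polynomial ℝ)^k0 ≠ 0 := pow_ne_zero _ X_ne_zero
  have hppne : pp n ≠ 0 := by rw [hfac]; exact mul_ne_zero hXne hqne
  have hroots_card : (pp n).roots.card = k0 + (qq n).roots.card := by
    rw [hfac, Polynomial.roots_mul (by rw [← hfac]; exact hppne), Multiset.card_add]
    congr 1
    rw [Polynomial.roots_pow, Polynomial.roots_X, Multiset.card_nsmul, Multiset.card_singleton,
      mul_one]
  apply le_antisymm
  · exact_mod_cast (pp n).card_roots' 
  · rw [pp_natDegree n hn, hroots_card]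
    omega


theorem part1 (n : ℕ) :
    (∑ k ∈ Finset.range (((X : Polynomial ℝ) ^ n).natDegree + 1),
        C (((X : Polynomial ℝ) ^ n).coeff (2 * k)) * X ^ k) =
      (if 2 ∣ n then (X : Polynomial ℝ) ^ (n / 2) else 0) := by
  rw [natDegree_X_pow]
  have h : ∀ k ∈ Finset.range (n+1),
      C (((X : Polynomial ℝ) ^ n).coeff (2 * k)) * X ^ k
      = if n = 2*k then X ^ k else 0 := by
    intro k _
    rw [coeff_X_pow]
    by_cases h : n = 2*k
    · rw [if_pos h.symm, if_pos h]; simp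
    · rw [if_neg (fun hh => h hh.symm), if_neg h]; simp
  rw [Finset.sum_congr rfl h]
  by_cases hd : 2 ∣ n
  · obtain ⟨m, rfl⟩ := hd
    have : ∀ k ∈ Finset.range (2*m+1), (if 2*m = 2*k then (X:Polynomial ℝ) ^ k else 0)
        = if k = m then X ^ k else 0 := by
      intro k _
      congr 1
      simp only [eq_iff_iff]
      constructor <;> omega
    rw [Finset.sum_congr rfl this, Finset.sum_ite_eq' (Finset.range (2*m+1)) m (fun k => (X:Polynomial ℝ)^k)]
    simp [Nat.lt_succ_iff, if_pos, Nat.mul_div_cancel_left]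
    omega
  · rw [if_neg hd]
    apply Finset.sum_eq_zero
    intro k _
    rw [if_neg]
    intro h; exact hd ⟨k, h⟩


/-- for `n ≥ 1`, `E₂(xⁿ)` equals `x^{n/2}` if `n` is even and `0`
otherwise; and for `r = 3`, the polynomial
`E₃((x + x²)ⁿ) = Σ_k C(n, 3k - n)·xᵏ` (binomial coefficient zero out of range)
has only real roots. -/
theorem stmt8 (n : ℕ) (hn : 1 ≤ n) :
    (∑ k ∈ Finset.range (((X : Polynomial ℝ) ^ n).natDegree + 1),
        C (((X : Polynomial ℝ) ^ n).coeff (2 * k)) * X ^ k) =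
      (if 2 ∣ n then (X : Polynomial ℝ) ^ (n / 2) else 0) ∧
    RealRooted (∑ k ∈ Finset.range (n + 1),
      C (if n ≤ 3 * k then ((n.choose (3 * k - n) : ℝ)) else 0) * X ^ k) := by
  constructor
  · exact part1 n
  · show RealRooted (pp n)
    rcases eq_or_lt_of_le hn with h1 | h2
    · have hz : pp 1 = 0 := by
        apply Finset.sum_eq_zero
        intro k hk
        simp only [Finset.mem_range] at hk
        interval_cases k <;> simp [cc] <;> norm_num [Nat.choose]
      rw [← h1, hz]
      unfold RealRooted
      simp
    · exact pp_realRooted n (by omega)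
end
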